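/- arXiv:2212.07590 — 7 statements merged into one kernel-verified Lean document; each statement's English description precedes it below -/
import Mathlib

section
/- Let G = (V,E) be a graph whose isoperimetric numbers satisfy ∂_V^{n+1} ≥ ∂_V^n for all n ≥ 1, and let G_c be its universal comparison graph. Then for every n ≥ 1, the vertex boundary in G_c of the set {1, 2, …, n} equals {n+1, n+2, …, n+∂_V^n}. -/
open scoped ENNReal Classical

noncomputable section

/-- A function on a countable vertex set *vanishes at infinity* if every
super-level set `{x : t < |f x|}` with `t > 0` is finite. -/
def VanishesAtInfinity {V : Type*} (f : V → ℝ) : Prop :=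
  ∀ t : ℝ, 0 < t → {x : V | t < |f x|}.Finite

/-- The `k`-th largest value (k ≥ 1, counted with multiplicity) assumed by `|f|`. -/
def kthLargest {V : Type*} (f : V → ℝ) (k : ℕ) : ℝ :=
  sInf {t : ℝ | 0 ≤ t ∧ {x : V | t < |f x|}.Finite ∧ {x : V | t < |f x|}.ncard < k}

/-- The rearrangement of `f` with respect to the labelling `η`, where `η n` is the
vertex carrying label `n + 1`:  `f*(η (k-1)) = k`-th largest value of `|f|`. -/
def rearrangementOf {V : Type*} (η : ℕ → V) (f : V → ℝ) : V → ℝ :=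
  fun v => kthLargest f (Function.invFun η v + 1)

/-- `‖∇f‖_p^p = Σ_{x∼y} |f x - f y|^p`, each edge counted once (value in `ℝ≥0∞`). -/
def gradPPow {V : Type*} (G : SimpleGraph V) (f : V → ℝ) (p : ℝ) : ℝ≥0∞ :=
  ∑' e : G.edgeSet, Sym2.lift
    ⟨fun x y => ENNReal.ofReal (|f x - f y| ^ p), fun x y => by dsimp only; rw [abs_sub_comm]⟩
    (e : Sym2 V)

/-- `‖∇f‖_p = (Σ_{x∼y} |f x - f y|^p)^{1/p}` (value in `ℝ≥0∞`). -/
def gradP {V : Type*} (G : SimpleGraph V) (f : V → ℝ) (p : ℝ) : ℝ≥0∞ :=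
  gradPPow G f p ^ (1 / p)

/-- `‖∇f‖_∞ = sup_{x∼y} |f x - f y|` (value in `ℝ≥0∞`). -/
def gradTop {V : Type*} (G : SimpleGraph V) (f : V → ℝ) : ℝ≥0∞ :=
  ⨆ e : G.edgeSet, Sym2.lift
    ⟨fun x y => ENNReal.ofReal |f x - f y|, fun x y => by dsimp only; rw [abs_sub_comm]⟩
    (e : Sym2 V)

/-- The vertex boundary `∂_V(X)` of a set of vertices. -/
def vertexBoundary {V : Type*} (G : SimpleGraph V) (X : Set V) : Set V :=
  {z : V | z ∉ X ∧ ∃ x ∈ X, G.Adj z x}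

/-- The isoperimetric number `∂_V^n`: the least vertex-perimeter among sets of `n` vertices. -/
def isoNum {V : Type*} (G : SimpleGraph V) (n : ℕ) : ℕ :=
  sInf {m : ℕ | ∃ X : Set V, X.Finite ∧ X.ncard = n ∧
    (vertexBoundary G X).Finite ∧ (vertexBoundary G X).ncard = m}

/-- `∂_V^n` with the convention `∂_V^0 = 1`. -/
def isoNum₀ {V : Type*} (G : SimpleGraph V) (n : ℕ) : ℕ :=
  if n = 0 then 1 else isoNum G n

/-- `b` is a neighbour of `a` larger than `a` in the universal comparison graph:
`(a-1) + ∂_V^{a-1} < b ≤ a + ∂_V^a`. -/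
def cAdj {V : Type*} (G : SimpleGraph V) (a b : ℕ+) : Prop :=
  a < b ∧ (a : ℕ) - 1 + isoNum₀ G ((a : ℕ) - 1) < (b : ℕ) ∧
    (b : ℕ) ≤ (a : ℕ) + isoNum G (a : ℕ)

/-- The universal comparison graph `G_c` of `G`, a graph on the positive integers. -/
def comparisonGraph {V : Type*} (G : SimpleGraph V) : SimpleGraph ℕ+ where
  Adj a b := cAdj G a b ∨ cAdj G b a
  symm := ⟨fun a b h => h.symm⟩
  loopless := ⟨fun a h => by
    rcases h with h | h <;> exact absurd h.1 (lt_irrefl a)⟩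

/-- The lattice graph `(ℤ², ℓ¹)`. -/
def latticeZ2 : SimpleGraph (ℤ × ℤ) where
  Adj x y := |x.1 - y.1| + |x.2 - y.2| = 1
  symm := by
    constructor
    intro x y h
    rw [abs_sub_comm y.1 x.1, abs_sub_comm y.2 x.2]
    exact h
  loopless := by constructor; intro x h; simp at h

/-- The lattice graph `(ℤ^d, ℓ¹)`. -/
def latticeZd (d : ℕ) : SimpleGraph (Fin d → ℤ) where
  Adj x y := (∑ i, |x i - y i|) = 1
  symm := by
    constructor
    intro x y h
    have : ∀ i, |y i - x i| = |x i - y i| := fun i => abs_sub_comm _ _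
    simpa [this] using h
  loopless := by constructor; intro x h; simp at h

/-- `ℓ¹`-norm on `ℤ²`. -/
def l1 (x : ℤ × ℤ) : ℤ := |x.1| + |x.2|

/-- One step of the counterclockwise square spiral on `ℤ²`. -/
def spiralNext : ℤ × ℤ → ℤ × ℤ := fun p =>
  if p.1 = 0 ∧ p.2 = 0 then (1, 0)
  else if p.2 < 0 ∧ |p.1| ≤ -p.2 then (p.1 + 1, p.2)
  else if 0 < p.1 ∧ |p.2| < p.1 then (p.1, p.2 + 1)
  else if 0 < p.2 ∧ p.1 ≤ p.2 ∧ -p.1 < p.2 then (p.1 - 1, p.2)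
  else (p.1, p.2 - 1)
/-- The spiral labelling of `ℤ²` (0-indexed): `spiral (k-1)` is the vertex with
spiral label `k`, so `spiral 0 = (0,0)`, `spiral 1 = (1,0)`, `spiral 2 = (1,1)`, … -/
def spiral : ℕ → ℤ × ℤ := fun n => spiralNext^[n] (0, 0)

lemma mono_aux {V : Type*} (G : SimpleGraph V)
    (hmono : ∀ n : ℕ, 1 ≤ n → isoNum G n ≤ isoNum G (n + 1)) :
    ∀ a b : ℕ, 1 ≤ a → a ≤ b → a + isoNum G a ≤ b + isoNum G b := by
  intro a b ha hab
  induction b with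
  | zero => omega
  | succ m ih =>
    rcases Nat.lt_or_ge a (m + 1) with h | h
    · have hm : a ≤ m := by omega
      have h1 := ih hm
      have h2 := hmono m (le_trans ha hm)
      omega
    · have : a = m + 1 := by omega
      subst this
      omega

/-- **Lemma (vertex boundary of initial segments of `G_c`).**  If the isoperimetric
numbers of `G` satisfy `∂_V^{n+1} ≥ ∂_V^n` for all `n ≥ 1`, then in the universal
comparison graph `G_c` the vertex boundary of `{1, 2, …, n}` is
`{n+1, n+2, …, n+∂_V^n}` for every `n ≥ 1`. -/
theorem comparisonGraph_vertexBoundary_initialSegment {V : Type*} (G : SimpleGraph V)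
    (hmono : ∀ n : ℕ, 1 ≤ n → isoNum G n ≤ isoNum G (n + 1))
    (n : ℕ) (hn : 1 ≤ n) :
    vertexBoundary (comparisonGraph G) {i : ℕ+ | (i : ℕ) ≤ n}
      = {i : ℕ+ | n < (i : ℕ) ∧ (i : ℕ) ≤ n + isoNum G n} := by
  ext z
  simp only [vertexBoundary, Set.mem_setOf_eq]
  constructor
  · rintro ⟨hz, x, hx, hadj⟩
    have hzn : n < (z : ℕ) := by simpa using hz
    rcases hadj with h | h
    · exact absurd h.1 (by
        have : (x : ℕ) < (z : ℕ) := by omega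
        exact not_lt.mpr (le_of_lt this))
    · refine ⟨hzn, ?_⟩
      have hx1 : 1 ≤ (x : ℕ) := x.one_le
      have hmn := mono_aux G hmono (x : ℕ) n hx1 hx
      have hzx := h.2.2
      omega
  · rintro ⟨hzn, hzle⟩
    refine ⟨fun h => absurd (show (z : ℕ) ≤ n from h) (by omega), ?_⟩
    have hz2 : 2 ≤ (z : ℕ) := by omega
    have hP1 : 1 ≤ (1 : ℕ) ∧ 1 - 1 + isoNum₀ G (1 - 1) < (z : ℕ) := by
      refine ⟨le_refl 1, ?_⟩
      show 0 + isoNum₀ G 0 < (z : ℕ)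
      rw [isoNum₀, if_pos rfl]
      omega
    set x := Nat.findGreatest
      (fun x => 1 ≤ x ∧ x - 1 + isoNum₀ G (x - 1) < (z : ℕ)) n with hxdef
    have hPx : 1 ≤ x ∧ x - 1 + isoNum₀ G (x - 1) < (z : ℕ) :=
      Nat.findGreatest_spec
        (P := fun x => 1 ≤ x ∧ x - 1 + isoNum₀ G (x - 1) < (z : ℕ)) hn hP1
    have hx1 : 1 ≤ x := hPx.1
    have hxn : x ≤ n := Nat.findGreatest_le n
    have hupper : (z : ℕ) ≤ x + isoNum G x := by
      rcases Nat.lt_or_ge x n with hlt | hge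
      · have hnot : ¬ (1 ≤ x + 1 ∧ x + 1 - 1 + isoNum₀ G (x + 1 - 1) < (z : ℕ)) :=
          Nat.findGreatest_is_greatest
            (P := fun x => 1 ≤ x ∧ x - 1 + isoNum₀ G (x - 1) < (z : ℕ))
            (n := n) (by rw [← hxdef]; omega) (by omega)
        simp only [Nat.add_sub_cancel] at hnot
        have h2 : ¬ (x + isoNum₀ G x < (z : ℕ)) := by omega
        have h3 : isoNum₀ G x = isoNum G x := by
          rw [isoNum₀, if_neg (by omega)]
        omega
      · have hxeq : x = n := by omega
        rw [hxeq]; exact hzle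
    refine ⟨⟨x, by omega⟩, by simpa using hxn, Or.inr ?_⟩
    refine ⟨?_, ?_, ?_⟩
    · have : x < (z : ℕ) := by omega
      exact_mod_cast this
    · simpa using hPx.2
    · simpa using hupper
end
end

section
/- (Comparison Lemma) Let G = (V,E) be a connected graph with countably infinite vertex set in which every vertex has finite degree and whose isoperimetric numbers satisfy ∂_V^{n+1} ≥ ∂_V^n for all n ≥ 1. Let f : V → ℝ_{≥0} be a function vanishing at infinity and let f_c be its comparison function on the universal comparison graph G_c = (ℕ_{≥1}, E_c). Then for every p ≥ 1, Σ_{(x,y) ∈ E_c} |f_c(x) − f_c(y)|^p ≤ Σ_{(x,y) ∈ E} |f(x) − f(y)|^p. -/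
open scoped ENNReal Classical

noncomputable section

set_option linter.unusedSectionVars false
section S1
variable {V : Type*} [Countable V] [Infinite V] (G : SimpleGraph V)

lemma boundary_finite (hlf : ∀ x : V, (G.neighborSet x).Finite) {X : Set V}
    (hX : X.Finite) : (vertexBoundary G X).Finite := by
  apply Set.Finite.subset (hX.biUnion (fun x _ => hlf x))
  rintro z ⟨hz, x, hx, hadj⟩
  exact Set.mem_biUnion hx hadj.symm

lemma exists_boundary_mem (hconn : G.Connected) {X : Set V} (hX : X.Finite)
    (hne : X.Nonempty) : (vertexBoundary G X).Nonempty := by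
  obtain ⟨x, hx⟩ := hne
  obtain ⟨y, hy⟩ := hX.infinite_compl.nonempty
  obtain ⟨w⟩ := hconn.preconnected y x
  clear hconn
  induction w with
  | nil => exact absurd hx hy
  | @cons u v x' hadj w ih =>
    by_cases hv : v ∈ X
    · exact ⟨u, hy, v, hv, hadj⟩
    · exact ih hx hv

lemma isoSet_nonempty (hlf : ∀ x : V, (G.neighborSet x).Finite) (n : ℕ) :
    {m : ℕ | ∃ X : Set V, X.Finite ∧ X.ncard = n ∧
      (vertexBoundary G X).Finite ∧ (vertexBoundary G X).ncard = m}.Nonempty := by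
  obtain ⟨X, -, hfin, hcard⟩ := (Set.infinite_univ (α := V)).exists_subset_ncard_eq n
  exact ⟨(vertexBoundary G X).ncard, X, hfin, hcard, boundary_finite G hlf hfin, rfl⟩

lemma isoNum_le (hlf : ∀ x : V, (G.neighborSet x).Finite) {X : Set V} (hX : X.Finite) :
    isoNum G X.ncard ≤ (vertexBoundary G X).ncard :=
  Nat.sInf_le ⟨X, hX, rfl, boundary_finite G hlf hX, rfl⟩

lemma one_le_isoNum (hconn : G.Connected) (hlf : ∀ x : V, (G.neighborSet x).Finite)
    {n : ℕ} (hn : 1 ≤ n) : 1 ≤ isoNum G n := by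
  obtain ⟨X, hfin, hcard, hbfin, hbcard⟩ := Nat.sInf_mem (isoSet_nonempty G hlf n)
  rw [isoNum, ← hbcard]
  have hne : X.Nonempty := Set.nonempty_of_ncard_ne_zero (by omega)
  have := exists_boundary_mem G hconn hfin hne
  exact (Set.ncard_pos hbfin).mpr this

lemma isoNum_mono_chain (hmono : ∀ n : ℕ, 1 ≤ n → isoNum G n ≤ isoNum G (n + 1))
    {n α : ℕ} (hn : 1 ≤ n) (h : n ≤ α) : isoNum G n ≤ isoNum G α := by
  induction α, h using Nat.le_induction with
  | base => exact le_refl _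
  | succ m hm ih => exact le_trans ih (hmono m (le_trans hn hm))

end S1
section S2
variable {V : Type*} [Countable V] [Infinite V] (G : SimpleGraph V)

def EE : ℕ → ℕ := fun n => n + isoNum₀ G n

def par : ℕ → ℕ := fun i => sInf {n | i ≤ EE G n}

lemma EE_zero : EE G 0 = 1 := by simp [EE, isoNum₀]

lemma EE_eq {n : ℕ} (hn : 1 ≤ n) : EE G n = n + isoNum G n := by
  show n + isoNum₀ G n = _
  rw [isoNum₀, if_neg (by omega : ¬ n = 0)]

variable (hconn : G.Connected) (hlf : ∀ x : V, (G.neighborSet x).Finite)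
  (hmono : ∀ n : ℕ, 1 ≤ n → isoNum G n ≤ isoNum G (n + 1))

include hconn hlf

lemma lt_EE (n : ℕ) : n < EE G n := by
  rcases Nat.eq_zero_or_pos n with h | h
  · simp [h, EE_zero]
  · have := one_le_isoNum G hconn hlf h
    rw [EE_eq G h]; omega

include hmono in
lemma EE_strictMono : StrictMono (EE G) := by
  apply strictMono_nat_of_lt_succ
  intro n
  rcases Nat.eq_zero_or_pos n with h | h
  · subst h
    rw [EE_zero]
    have := one_le_isoNum G hconn hlf (le_refl 1)
    rw [EE_eq G (le_refl 1)]; omega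
  · have := hmono n h
    rw [EE_eq G h, EE_eq G (by omega)]; omega

lemma parSet_nonempty (i : ℕ) : {n | i ≤ EE G n}.Nonempty :=
  ⟨i, (lt_EE G hconn hlf i).le⟩

lemma le_EE_par (i : ℕ) : i ≤ EE G (par G i) :=
  Nat.sInf_mem (parSet_nonempty G hconn hlf i)

include hmono in
lemma par_le_iff {i m : ℕ} : par G i ≤ m ↔ i ≤ EE G m := by
  constructor
  · intro h
    exact le_trans (le_EE_par G hconn hlf i) ((EE_strictMono G hconn hlf hmono).monotone h)
  · intro h
    exact Nat.sInf_le h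

lemma one_le_par {i : ℕ} (hi : 2 ≤ i) : 1 ≤ par G i := by
  by_contra h
  have h0 : par G i = 0 := by omega
  have := le_EE_par G hconn hlf i
  rw [h0, EE_zero] at this; omega

lemma EE_par_pred_lt {i : ℕ} (hi : 2 ≤ i) : EE G (par G i - 1) < i := by
  by_contra h
  push_neg at h
  have h1 := one_le_par G hconn hlf hi
  have := Nat.sInf_le (s := {n | i ≤ EE G n}) h
  change par G i ≤ _ at this
  omega

lemma par_lt {i : ℕ} (hi : 2 ≤ i) : par G i < i := by
  have h1 := one_le_par G hconn hlf hi
  have h2 := EE_par_pred_lt G hconn hlf hi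
  have h3 := lt_EE G hconn hlf (par G i - 1)
  omega

end S2
section S3
variable {V : Type*} [Countable V] [Infinite V] {f : V → ℝ}

lemma D_up {k : ℕ} {t t' : ℝ} (h : t ≤ t')
    (ht : 0 ≤ t ∧ {x : V | t < |f x|}.Finite ∧ {x : V | t < |f x|}.ncard < k) :
    0 ≤ t' ∧ {x : V | t' < |f x|}.Finite ∧ {x : V | t' < |f x|}.ncard < k := by
  obtain ⟨h0, hfin, hcard⟩ := ht
  have hsub : {x : V | t' < |f x|} ⊆ {x : V | t < |f x|} := fun x hx => lt_of_le_of_lt h hx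
  exact ⟨le_trans h0 h, hfin.subset hsub,
    lt_of_le_of_lt (Set.ncard_le_ncard hsub hfin) hcard⟩

variable (hf : VanishesAtInfinity f)
include hf

lemma D_nonempty {k : ℕ} (hk : 1 ≤ k) :
    {t : ℝ | 0 ≤ t ∧ {x : V | t < |f x|}.Finite ∧ {x : V | t < |f x|}.ncard < k}.Nonempty := by
  have hS : {x : V | (1:ℝ) < |f x|}.Finite := hf 1 one_pos
  obtain ⟨b, hb⟩ := (hS.image (fun x => |f x|)).bddAbove
  refine ⟨max 1 b, by positivity, ?_⟩
  have : {x : V | max 1 b < |f x|} = ∅ := by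
    ext x
    simp only [Set.mem_setOf_eq, Set.mem_empty_iff_false, iff_false, not_lt]
    by_cases h1 : 1 < |f x|
    · exact le_trans (hb (Set.mem_image_of_mem _ h1)) (le_max_right _ _)
    · exact le_trans (not_lt.mp h1) (le_max_left _ _)
  rw [this]
  simpa using (show 0 < k by omega)

lemma vals_nonneg (k : ℕ) (hk : 1 ≤ k) : 0 ≤ kthLargest f k :=
  le_csInf (D_nonempty hf hk) (fun _ ht => ht.1)

lemma vals_antitone {k k' : ℕ} (hk : 1 ≤ k) (h : k ≤ k') : kthLargest f k' ≤ kthLargest f k := by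
  apply csInf_le_csInf ⟨0, fun t ht => ht.1⟩ (D_nonempty hf hk)
  rintro t ⟨h0, hfin, hcard⟩
  exact ⟨h0, hfin, lt_of_lt_of_le hcard h⟩

lemma vals_le_iff {k : ℕ} (hk : 1 ≤ k) {t : ℝ} (ht : 0 < t) :
    kthLargest f k ≤ t ↔ {x : V | t < |f x|}.ncard < k := by
  constructor
  · intro h
    rcases lt_or_eq_of_le h with h | h
    · obtain ⟨d, hd, hdt⟩ := exists_lt_of_csInf_lt (D_nonempty hf hk) h
      have hsub : {x : V | t < |f x|} ⊆ {x : V | d < |f x|} :=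
        fun x hx => lt_of_le_of_lt hdt.le hx
      exact lt_of_le_of_lt (Set.ncard_le_ncard hsub hd.2.1) hd.2.2
    · by_contra hge
      push_neg at hge
      have hSfin : {x : V | t < |f x|}.Finite := hf t ht
      have hSne : {x : V | t < |f x|}.Nonempty := by
        rw [← Set.ncard_pos hSfin]; omega
      set Fi := hSfin.toFinset.image (fun x => |f x|) with hFi
      have hFine : Fi.Nonempty := by
        simpa [hFi, Finset.image_nonempty, Set.Finite.toFinset_nonempty] using hSne
      set m0 := Fi.min' hFine with hm0
      have htm0 : t < m0 := by
        apply lt_of_not_ge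
        intro hle
        obtain ⟨y, hy, hym⟩ := Finset.mem_image.mp (Fi.min'_mem hFine)
        have := hSfin.mem_toFinset.mp hy
        rw [hm0] at hle
        rw [← hym] at hle
        simp only [Set.mem_setOf_eq] at this
        linarith
      obtain ⟨d, hd, hdm⟩ := exists_lt_of_csInf_lt (D_nonempty hf hk) (h ▸ htm0)
      have hdt : t ≤ d := h ▸ csInf_le ⟨0, fun s hs => hs.1⟩ hd
      have hsub : {x : V | t < |f x|} ⊆ {x : V | d < |f x|} := by
        intro x hx
        have : m0 ≤ |f x| := Fi.min'_le _ (Finset.mem_image_of_mem _ (hSfin.mem_toFinset.mpr hx))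
        exact lt_of_lt_of_le hdm this
      obtain ⟨-, hdfin, hdc⟩ := hd
      have := Set.ncard_le_ncard hsub hdfin
      omega
  · intro h
    exact csInf_le ⟨0, fun s hs => hs.1⟩ ⟨ht.le, hf t ht, h⟩

lemma lt_vals_iff {k : ℕ} (hk : 1 ≤ k) {t : ℝ} (ht : 0 < t) :
    t < kthLargest f k ↔ k ≤ {x : V | t < |f x|}.ncard := by
  rw [← not_le, vals_le_iff hf hk ht, not_lt]

lemma ncard_ge_of_vals_pos {k : ℕ} (hk : 1 ≤ k) (h : 0 < kthLargest f k) :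
    k ≤ {x : V | kthLargest f k ≤ |f x|}.ncard := by
  set a := kthLargest f k with ha
  have h2 : 0 < a / 2 := by positivity
  have hVp : {x : V | a / 2 < |f x| ∧ |f x| < a}.Finite :=
    (hf _ h2).subset (fun x hx => hx.1)
  have key : ∃ t₀ : ℝ, 0 < t₀ ∧ t₀ < a ∧
      {x : V | t₀ < |f x|} ⊆ {x : V | a ≤ |f x|} := by
    by_cases hne : {x : V | a / 2 < |f x| ∧ |f x| < a}.Nonempty
    · set Fi := hVp.toFinset.image (fun x => |f x|) with hFi
      have hFine : Fi.Nonempty := by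
        simpa [hFi, Finset.image_nonempty, Set.Finite.toFinset_nonempty] using hne
      set t₀ := Fi.max' hFine with ht₀
      obtain ⟨y, hy, hym⟩ := Finset.mem_image.mp (Fi.max'_mem hFine)
      have hyprop := hVp.mem_toFinset.mp hy
      have h1 : 0 < t₀ := by rw [ht₀, ← hym]; linarith [hyprop.1]
      have h2' : t₀ < a := by rw [ht₀, ← hym]; exact hyprop.2
      refine ⟨t₀, h1, h2', fun x hx => ?_⟩
      simp only [Set.mem_setOf_eq] at hx ⊢
      by_contra hlt
      push_neg at hlt
      have hx2 : a / 2 < |f x| := lt_trans (by linarith [hyprop.1, hym]) hx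
      have : |f x| ≤ t₀ :=
        Fi.le_max' _ (Finset.mem_image_of_mem _ (hVp.mem_toFinset.mpr ⟨hx2, hlt⟩))
      linarith
    · refine ⟨a / 2, h2, by linarith, fun x hx => ?_⟩
      simp only [Set.mem_setOf_eq] at hx ⊢
      by_contra hlt
      push_neg at hlt
      exact hne ⟨x, hx, hlt⟩
  obtain ⟨t₀, h1, h2', hsub⟩ := key
  have hk1 : k ≤ {x : V | t₀ < |f x|}.ncard := (lt_vals_iff hf hk h1).mp h2'
  have hsub2 : {x : V | a ≤ |f x|} ⊆ {x : V | t₀ < |f x|} :=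
    fun x hx => lt_of_lt_of_le h2' hx
  have : {x : V | a ≤ |f x|}.Finite := (hf t₀ h1).subset hsub2
  exact le_trans hk1 (Set.ncard_le_ncard hsub this)

end S3
section S4
variable {V : Type*} [Countable V] [Infinite V] (G : SimpleGraph V)

variable (hconn : G.Connected) (hlf : ∀ x : V, (G.neighborSet x).Finite)
  (hmono : ∀ n : ℕ, 1 ≤ n → isoNum G n ≤ isoNum G (n + 1))

include hconn hlf hmono

lemma cAdj_iff (a b : ℕ+) : cAdj G a b ↔ (2 ≤ (b:ℕ) ∧ (a:ℕ) = par G (b:ℕ)) := by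
  have hEE : (a:ℕ) - 1 + isoNum₀ G ((a:ℕ) - 1) = EE G ((a:ℕ) - 1) := rfl
  have ha1 : 1 ≤ (a:ℕ) := a.2
  have hEEa : EE G (a:ℕ) = (a:ℕ) + isoNum G (a:ℕ) := EE_eq G ha1
  constructor
  · rintro ⟨hab, h1, h2⟩
    rw [hEE] at h1
    have hlt := lt_EE G hconn hlf ((a:ℕ) - 1)
    have hb2 : 2 ≤ (b:ℕ) := by omega
    have hple : par G (b:ℕ) ≤ (a:ℕ) :=
      (par_le_iff G hconn hlf hmono).mpr (by rw [hEEa]; exact h2)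
    have hpge : (a:ℕ) ≤ par G (b:ℕ) := by
      by_contra hcon
      push_neg at hcon
      have : par G (b:ℕ) ≤ (a:ℕ) - 1 := by omega
      have := le_trans (le_EE_par G hconn hlf (b:ℕ))
        ((EE_strictMono G hconn hlf hmono).monotone this)
      omega
    exact ⟨hb2, by omega⟩
  · rintro ⟨hb2, hpar⟩
    have h1 : EE G ((a:ℕ) - 1) < (b:ℕ) := by
      rw [hpar]; exact EE_par_pred_lt G hconn hlf hb2
    have h2 : (b:ℕ) ≤ (a:ℕ) + isoNum G (a:ℕ) := by
      rw [← hEEa, hpar]; exact le_EE_par G hconn hlf (b:ℕ)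
    have h3 : (a:ℕ) < (b:ℕ) := by rw [hpar]; exact par_lt G hconn hlf hb2
    exact ⟨by exact_mod_cast h3, by rw [hEE]; exact h1, h2⟩

def parP {i : ℕ+} (hi : 2 ≤ (i:ℕ)) : ℕ+ :=
  ⟨par G (i:ℕ), one_le_par G hconn hlf hi⟩

def edgeMap : {i : ℕ+ // 2 ≤ (i:ℕ)} → (comparisonGraph G).edgeSet := fun i =>
  ⟨s(parP G hconn hlf i.2, i.1), by
    rw [SimpleGraph.mem_edgeSet]
    apply Or.inl
    exact (cAdj_iff G hconn hlf hmono _ _).mpr ⟨i.2, rfl⟩⟩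

lemma edgeMap_bijective : Function.Bijective (edgeMap G hconn hlf hmono) := by
  constructor
  · rintro ⟨i, hi⟩ ⟨j, hj⟩ h
    simp only [edgeMap, Subtype.mk_eq_mk, Sym2.eq_iff] at h
    rcases h with ⟨h1, h2⟩ | ⟨h1, h2⟩
    · exact Subtype.ext h2
    · exfalso
      have hpi : (parP G hconn hlf hi : ℕ) = par G (i:ℕ) := rfl
      have hpj : (parP G hconn hlf hj : ℕ) = par G (j:ℕ) := rfl
      have l1 := par_lt G hconn hlf hi
      have l2 := par_lt G hconn hlf hj
      have e1 : (parP G hconn hlf hi : ℕ+) = j := h1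
      have e2 : (i : ℕ+) = parP G hconn hlf hj := h2
      have c1 : par G (i:ℕ) = (j:ℕ) := congrArg PNat.val e1
      have c2 : (i:ℕ) = par G (j:ℕ) := congrArg PNat.val e2
      omega
  · rintro ⟨e, he⟩
    induction e with
    | _ a b =>
      rw [SimpleGraph.mem_edgeSet] at he
      rcases he with hc | hc
      · obtain ⟨hb2, hpar⟩ := (cAdj_iff G hconn hlf hmono _ _).mp hc
        refine ⟨⟨b, hb2⟩, ?_⟩
        simp only [edgeMap, Subtype.mk_eq_mk]
        have hpa : parP G hconn hlf hb2 = a := by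
          apply PNat.coe_injective; exact hpar.symm
        rw [hpa]
      · obtain ⟨hb2, hpar⟩ := (cAdj_iff G hconn hlf hmono _ _).mp hc
        refine ⟨⟨a, hb2⟩, ?_⟩
        simp only [edgeMap, Subtype.mk_eq_mk]
        rw [Sym2.eq_swap]
        have hpa : parP G hconn hlf hb2 = b := by
          apply PNat.coe_injective; exact hpar.symm
        rw [hpa]

lemma lhs_formula (f : V → ℝ) (hf : VanishesAtInfinity f) (p : ℝ) :
    gradPPow (comparisonGraph G) (fun k : ℕ+ => kthLargest f (k : ℕ)) p
      = ∑' (i : {i : ℕ+ // 2 ≤ (i:ℕ)}),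
          ENNReal.ofReal ((kthLargest f (par G (i:ℕ)) - kthLargest f (i:ℕ)) ^ p) := by
  rw [gradPPow, ← Equiv.tsum_eq (Equiv.ofBijective _ (edgeMap_bijective G hconn hlf hmono))]
  apply tsum_congr
  intro i
  have : ((Equiv.ofBijective _ (edgeMap_bijective G hconn hlf hmono)) i : Sym2 ℕ+)
      = s(parP G hconn hlf i.2, i.1) := rfl
  rw [this, Sym2.lift_mk]
  simp only
  congr 1
  have hple : par G (i:ℕ) ≤ (i:ℕ) := (par_lt G hconn hlf i.2).le
  have h1 : 1 ≤ par G (i:ℕ) := one_le_par G hconn hlf i.2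
  have : kthLargest f (i:ℕ) ≤ kthLargest f (par G (i:ℕ)) := vals_antitone hf h1 hple
  have hpi : (parP G hconn hlf i.2 : ℕ) = par G (i:ℕ) := rfl
  rw [hpi, abs_of_nonneg (by linarith)]

end S4
section S5
open MeasureTheory

lemma key_integral {p : ℝ} (hp : 1 ≤ p) {x y : ℝ} (h0 : 0 ≤ y) (hyx : y ≤ x) :
    ∫⁻ t, (Set.Ico y x).indicator (fun t => ENNReal.ofReal (p * (x - t) ^ (p - 1))) t
      = ENNReal.ofReal ((x - y) ^ p) := by
  have hp0 : (0:ℝ) < p := lt_of_lt_of_le one_pos hp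
  rcases eq_or_lt_of_le hyx with h | h
  · subst h
    simp [Real.zero_rpow (ne_of_gt hp0)]
  · rw [lintegral_indicator measurableSet_Ico,
      Measure.restrict_congr_set Ico_ae_eq_Ioc]
    have hInt : IntervalIntegrable (fun t => p * (x - t) ^ (p - 1)) volume y x := by
      apply ContinuousOn.intervalIntegrable
      apply ContinuousOn.mul continuousOn_const
      apply ContinuousOn.rpow_const ((continuous_const.sub continuous_id).continuousOn)
      intro t _
      right; linarith
    have hIoc : IntegrableOn (fun t => p * (x - t) ^ (p - 1)) (Set.Ioc y x) volume :=
      (intervalIntegrable_iff_integrableOn_Ioc_of_le hyx).mp hInt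
    rw [← ofReal_integral_eq_lintegral_ofReal hIoc]
    · congr 1
      rw [← intervalIntegral.integral_of_le hyx]
      have hftc := intervalIntegral.integral_eq_sub_of_hasDerivAt
        (f := fun t => -(x - t) ^ p) (f' := fun t => p * (x - t) ^ (p - 1))
        (a := y) (b := x)
        (fun t _ => by
          have h1 : HasDerivAt (fun t : ℝ => x - t) (-1) t := (hasDerivAt_id t).const_sub x
          have h2 := (h1.rpow_const (p := p) (Or.inr hp)).neg
          convert h2 using 1
          · rfl
          · ring) hInt
      rw [hftc]
      rw [sub_self, Real.zero_rpow (ne_of_gt hp0)]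
      ring
    · apply ae_restrict_of_forall_mem measurableSet_Ioc
      intro t ht
      have : (0:ℝ) ≤ x - t := by linarith [ht.2]
      positivity

end S5
section S6
set_option linter.unusedSectionVars false
set_option maxHeartbeats 1000000
open Set

lemma ncard_Ioc_nat (a b : ℕ) : (Set.Ioc a b).ncard = b - a := by
  rw [Set.ncard_eq_toFinset_card']
  simp

variable {V : Type*} [Countable V] [Infinite V] (G : SimpleGraph V)
variable (hconn : G.Connected) (hlf : ∀ x : V, (G.neighborSet x).Finite)
  (hmono : ∀ n : ℕ, 1 ≤ n → isoNum G n ≤ isoNum G (n + 1))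
  {f : V → ℝ} (hpos : ∀ x, 0 ≤ f x) (hf : VanishesAtInfinity f)

include hconn hlf hmono hpos hf

lemma core {t : ℝ} (ht : 0 < t) (hm : 1 ≤ ({x : V | t < |f x|}).ncard) :
    ∃ w u : ℕ → V,
      Set.InjOn w (Set.Ioc ({x : V | t < |f x|}).ncard (EE G ({x : V | t < |f x|}).ncard)) ∧
      ∀ i ∈ Set.Ioc ({x : V | t < |f x|}).ncard (EE G ({x : V | t < |f x|}).ncard),
        G.Adj (u i) (w i) ∧ f (w i) ≤ t ∧ kthLargest f (par G i) ≤ f (u i) ∧ t < f (u i) := by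
  have _inst : Nonempty V := inferInstance
  set T := {x : V | t < |f x|} with hT
  set m := T.ncard with hmdef
  have hTfin : T.Finite := hf t ht
  set A : ℕ → Set V := fun n => {x : V | kthLargest f n ≤ |f x|} with hA
  set W : ℕ → Set V := fun n => vertexBoundary G (A n) \ T with hWdef
  have hvals_gt : ∀ n, 1 ≤ n → n ≤ m → t < kthLargest f n :=
    fun n h1 h2 => (lt_vals_iff hf h1 ht).mpr h2
  have hAsub : ∀ n, 1 ≤ n → n ≤ m → A n ⊆ T :=
    fun n h1 h2 x hx => lt_of_lt_of_le (hvals_gt n h1 h2) hx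
  have hAfin : ∀ n, 1 ≤ n → n ≤ m → (A n).Finite :=
    fun n h1 h2 => hTfin.subset (hAsub n h1 h2)
  have hAcard : ∀ n, 1 ≤ n → n ≤ m → n ≤ (A n).ncard := by
    intro n h1 h2
    exact ncard_ge_of_vals_pos hf h1 (lt_trans ht (hvals_gt n h1 h2))
  have hWfin : ∀ n, 1 ≤ n → n ≤ m → (W n).Finite := by
    intro n h1 h2
    exact (boundary_finite G hlf (hAfin n h1 h2)).subset Set.diff_subset
  have hWcard : ∀ n, 1 ≤ n → n ≤ m → EE G n ≤ m + (W n).ncard := by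
    intro n h1 h2
    have hαn := hAcard n h1 h2
    have hαm : (A n).ncard ≤ m := Set.ncard_le_ncard (hAsub n h1 h2) hTfin
    have hiso1 : isoNum G n ≤ isoNum G ((A n).ncard) :=
      isoNum_mono_chain G hmono h1 hαn
    have hiso2 : isoNum G ((A n).ncard) ≤ (vertexBoundary G (A n)).ncard :=
      isoNum_le G hlf (hAfin n h1 h2)
    have hsplit : vertexBoundary G (A n) ⊆ W n ∪ (T \ A n) := by
      intro z hz
      by_cases hzT : z ∈ T
      · exact Or.inr ⟨hzT, hz.1⟩
      · exact Or.inl ⟨hz, hzT⟩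
    have hbd : (vertexBoundary G (A n)).ncard ≤ (W n).ncard + (T \ A n).ncard := by
      refine le_trans (Set.ncard_le_ncard hsplit ?_) (Set.ncard_union_le _ _)
      exact ((hWfin n h1 h2).union (hTfin.subset Set.diff_subset))
    have hdiff : (T \ A n).ncard = m - (A n).ncard :=
      Set.ncard_diff (hAsub n h1 h2) (hAfin n h1 h2)
    rw [EE_eq G h1]
    omega
  have hEEm : m < EE G m := lt_EE G hconn hlf m
  -- recursion
  have hrec : ∀ k, k ≤ EE G m - m → ∃ ww : ℕ → V,
      Set.InjOn ww (Set.Ioc m (m + k)) ∧ ∀ i ∈ Set.Ioc m (m + k), ww i ∈ W (par G i) := by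
    intro k
    induction k with
    | zero =>
      intro _
      exact ⟨fun _ => Classical.arbitrary V, by simp [Set.Ioc_self], by simp [Set.Ioc_self]⟩
    | succ k ih =>
      intro hk
      obtain ⟨ww, hinj, hmem⟩ := ih (by omega)
      set i := m + k + 1 with hi
      have hiEE : i ≤ EE G m := by omega
      have hi2 : 2 ≤ i := by omega
      have hpar_le : par G i ≤ m := (par_le_iff G hconn hlf hmono).mpr hiEE
      have hpar1 : 1 ≤ par G i := one_le_par G hconn hlf hi2
      have hWc : i ≤ m + (W (par G i)).ncard :=
        le_trans (le_EE_par G hconn hlf i) (hWcard (par G i) hpar1 hpar_le)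
      have himg : (ww '' Set.Ioc m (m + k)).ncard ≤ k := by
        refine le_trans (Set.ncard_image_le (Set.finite_Ioc _ _)) ?_
        rw [_root_.ncard_Ioc_nat]
        omega
      have hex : (W (par G i) \ ww '' Set.Ioc m (m + k)).Nonempty := by
        by_contra hcon
        rw [Set.not_nonempty_iff_eq_empty, Set.diff_eq_empty] at hcon
        have := Set.ncard_le_ncard hcon ((Set.finite_Ioc _ _).image _)
        omega
      obtain ⟨z, hzW, hznot⟩ := hex
      refine ⟨Function.update ww i z, ?_, ?_⟩
      · intro a ha b hb hab
        have ha' : a ∈ Set.Ioc m (m + (k+1)) := ha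
        have hb' : b ∈ Set.Ioc m (m + (k+1)) := hb
        by_cases hai : a = i
        · by_cases hbi : b = i
          · rw [hai, hbi]
          · exfalso
            rw [hai, Function.update_self] at hab
            rw [Function.update_of_ne hbi] at hab
            have hbmem : b ∈ Set.Ioc m (m + k) := by
              simp only [Set.mem_Ioc] at hb' ⊢; omega
            exact hznot ⟨b, hbmem, hab.symm⟩
        · by_cases hbi : b = i
          · exfalso
            rw [hbi, Function.update_self] at hab
            rw [Function.update_of_ne hai] at hab
            have hamem : a ∈ Set.Ioc m (m + k) := by
              simp only [Set.mem_Ioc] at ha' ⊢; omega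
            exact hznot ⟨a, hamem, hab⟩
          · rw [Function.update_of_ne hai, Function.update_of_ne hbi] at hab
            have hamem : a ∈ Set.Ioc m (m + k) := by
              simp only [Set.mem_Ioc] at ha' ⊢; omega
            have hbmem : b ∈ Set.Ioc m (m + k) := by
              simp only [Set.mem_Ioc] at hb' ⊢; omega
            exact hinj hamem hbmem hab
      · intro j hj
        by_cases hji : j = i
        · rw [hji, Function.update_self]
          rw [← hji]
          rw [hji]
          exact hzW
        · rw [Function.update_of_ne hji]
          refine hmem j ?_
          simp only [Set.mem_Ioc] at hj ⊢
          omega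
  obtain ⟨ww, hinj, hmem⟩ := hrec (EE G m - m) le_rfl
  have heq : m + (EE G m - m) = EE G m := by omega
  rw [heq] at hinj hmem
  have habs : ∀ x : V, |f x| = f x := fun x => abs_of_nonneg (hpos x)
  have hu : ∀ i, ∃ uu : V, i ∈ Set.Ioc m (EE G m) →
      (G.Adj uu (ww i) ∧ f (ww i) ≤ t ∧ kthLargest f (par G i) ≤ f uu ∧ t < f uu) := by
    intro i
    by_cases h : i ∈ Set.Ioc m (EE G m)
    · obtain ⟨⟨hnotA, x, hxA, hadj⟩, hnotT⟩ := hmem i h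
      have hi2 : 2 ≤ i := by
        have := h.1; omega
      have hpar_le : par G i ≤ m := (par_le_iff G hconn hlf hmono).mpr h.2
      have hpar1 : 1 ≤ par G i := one_le_par G hconn hlf hi2
      refine ⟨x, fun _ => ⟨hadj.symm, ?_, ?_, ?_⟩⟩
      · have : ¬ t < |f (ww i)| := hnotT
        rw [habs] at this
        linarith [not_lt.mp this]
      · have : kthLargest f (par G i) ≤ |f x| := hxA
        rwa [habs] at this
      · have h1 : kthLargest f (par G i) ≤ |f x| := hxA
        rw [habs] at h1
        exact lt_of_lt_of_le (hvals_gt (par G i) hpar1 hpar_le) h1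
    · exact ⟨Classical.arbitrary V, fun hc => absurd hc h⟩
  choose u hu using hu
  exact ⟨ww, u, hinj, fun i hi => hu i hi⟩

end S6
section S7
set_option linter.unusedSectionVars false
set_option maxHeartbeats 1000000
open MeasureTheory

variable {V : Type*} [Countable V] [Infinite V]

def gfun (G : SimpleGraph V) (f : V → ℝ) (p : ℝ) (i : ℕ) : ℝ → ℝ≥0∞ :=
  fun t => (Set.Ico (kthLargest f i) (kthLargest f (par G i))).indicator
    (fun s => ENNReal.ofReal (p * (kthLargest f (par G i) - s) ^ (p - 1))) t

def hker (f : V → ℝ) (p : ℝ) (a b : V) : ℝ → ℝ≥0∞ :=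
  fun t => (Set.Ico (min (f a) (f b)) (max (f a) (f b))).indicator
    (fun s => ENNReal.ofReal (p * (max (f a) (f b) - s) ^ (p - 1))) t

lemma hker_symm (f : V → ℝ) (p : ℝ) (a b : V) : hker f p a b = hker f p b a := by
  unfold hker; rw [min_comm, max_comm]

def hfun (f : V → ℝ) (p : ℝ) : Sym2 V → ℝ → ℝ≥0∞ :=
  Sym2.lift ⟨fun a b => hker f p a b, fun a b => hker_symm f p a b⟩

lemma meas_aux {p : ℝ} (hp : 1 ≤ p) (c d : ℝ) :
    Measurable (fun t : ℝ => (Set.Ico c d).indicator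
      (fun s => ENNReal.ofReal (p * (d - s) ^ (p - 1))) t) := by
  apply Measurable.indicator _ measurableSet_Ico
  apply ENNReal.measurable_ofReal.comp
  apply Measurable.const_mul
  have hcont : Continuous (fun x : ℝ => x ^ (p - 1)) := by
    rw [continuous_iff_continuousAt]
    intro x
    exact Real.continuousAt_rpow_const x (p - 1) (Or.inr (by linarith))
  exact (hcont.comp (continuous_const.sub continuous_id)).measurable

lemma gfun_meas (G : SimpleGraph V) (f : V → ℝ) {p : ℝ} (hp : 1 ≤ p) (i : ℕ) :
    Measurable (gfun G f p i) := meas_aux hp _ _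

lemma hfun_meas (f : V → ℝ) {p : ℝ} (hp : 1 ≤ p) (e : Sym2 V) :
    Measurable (hfun f p e) := by
  induction e with
  | _ a b =>
    have : hfun f p s(a, b) = hker f p a b := by
      unfold hfun; rw [Sym2.lift_mk]
    rw [this]
    exact meas_aux hp _ _

variable (G : SimpleGraph V)
variable (hconn : G.Connected) (hlf : ∀ x : V, (G.neighborSet x).Finite)
  (hmono : ∀ n : ℕ, 1 ≤ n → isoNum G n ≤ isoNum G (n + 1))
  {f : V → ℝ} (hpos : ∀ x, 0 ≤ f x) (hf : VanishesAtInfinity f)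

include hconn hlf hmono hpos hf

lemma pointwise {p : ℝ} (hp : 1 ≤ p) {t : ℝ} (ht : t ≠ 0) :
    ∑' (i : {i : ℕ+ // 2 ≤ (i : ℕ)}), gfun G f p (i : ℕ) t
      ≤ ∑' (e : G.edgeSet), hfun f p (e : Sym2 V) t := by
  rcases lt_or_gt_of_ne ht with htneg | htpos
  · have hzero : ∀ i : {i : ℕ+ // 2 ≤ (i : ℕ)}, gfun G f p (i : ℕ) t = 0 := by
      intro i
      apply Set.indicator_of_notMem
      intro hmem
      have h0 : (0:ℝ) ≤ kthLargest f (i : ℕ) := vals_nonneg hf _ (by have := i.2; omega)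
      exact absurd hmem.1 (by linarith)
    rw [tsum_congr hzero, tsum_zero]
    exact zero_le
  · set m := {x : V | t < |f x|}.ncard with hmdef
    have hvan : ∀ i : {i : ℕ+ // 2 ≤ (i : ℕ)},
        ((i : ℕ+) : ℕ) ∉ Set.Ioc m (EE G m) → gfun G f p ((i : ℕ+) : ℕ) t = 0 := by
      intro i hnot
      have hi2 : 2 ≤ ((i : ℕ+) : ℕ) := i.2
      apply Set.indicator_of_notMem
      intro hmem
      obtain ⟨h1, h2⟩ := hmem
      have hml : m < ((i : ℕ+) : ℕ) := by
        by_contra hc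
        push_neg at hc
        have := (lt_vals_iff hf (by omega) htpos).mpr hc
        linarith
      have hpar1 : 1 ≤ par G ((i : ℕ+) : ℕ) := one_le_par G hconn hlf hi2
      have hup : ((i : ℕ+) : ℕ) ≤ EE G m := by
        have hparle : par G ((i : ℕ+) : ℕ) ≤ m := by
          by_contra hc
          push_neg at hc
          have := (vals_le_iff hf hpar1 htpos).mpr hc
          linarith
        exact le_trans (le_EE_par G hconn hlf _)
          ((EE_strictMono G hconn hlf hmono).monotone hparle)
      exact hnot ⟨hml, hup⟩
    by_cases hm1 : 1 ≤ m
    · obtain ⟨w, u, hinj, hprop⟩ := core G hconn hlf hmono hpos hf htpos hm1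
      have hfin : {i : {i : ℕ+ // 2 ≤ (i : ℕ)} | ((i : ℕ+) : ℕ) ∈ Set.Ioc m (EE G m)}.Finite := by
        have : {i : {i : ℕ+ // 2 ≤ (i : ℕ)} | ((i : ℕ+) : ℕ) ∈ Set.Ioc m (EE G m)}
            = (fun i : {i : ℕ+ // 2 ≤ (i : ℕ)} => ((i : ℕ+) : ℕ)) ⁻¹' (Set.Ioc m (EE G m)) := rfl
        rw [this]
        apply Set.Finite.preimage _ (Set.finite_Ioc _ _)
        intro a _ b _ hab
        exact Subtype.ext (PNat.coe_injective hab)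
      rw [tsum_eq_sum (s := hfin.toFinset)
        (by intro b hb; exact hvan b (by simpa using hb))]
      obtain ⟨x0⟩ : Nonempty V := inferInstance
      obtain ⟨z0, hz0⟩ := exists_boundary_mem G hconn (Set.finite_singleton x0) ⟨x0, rfl⟩
      obtain ⟨-, x0', hx0', hadj0⟩ := hz0
      have he0 : s(z0, x0') ∈ G.edgeSet := hadj0
      set Ψ : {i : ℕ+ // 2 ≤ (i : ℕ)} → G.edgeSet := fun i =>
        if h : ((i : ℕ+) : ℕ) ∈ Set.Ioc m (EE G m)
        then ⟨s(u ((i : ℕ+) : ℕ), w ((i : ℕ+) : ℕ)), (hprop _ h).1⟩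
        else ⟨s(z0, x0'), he0⟩ with hΨ
      have hbound : ∀ i ∈ hfin.toFinset,
          gfun G f p ((i : ℕ+) : ℕ) t ≤ hfun f p ((Ψ i : G.edgeSet) : Sym2 V) t := by
        intro i hi
        have h : ((i : ℕ+) : ℕ) ∈ Set.Ioc m (EE G m) := by simpa using hi
        obtain ⟨hadj, hwle, hule, hut⟩ := hprop _ h
        have hi2 : 2 ≤ ((i : ℕ+) : ℕ) := i.2
        have hpar1 : 1 ≤ par G ((i : ℕ+) : ℕ) := one_le_par G hconn hlf hi2
        have hparle : par G ((i : ℕ+) : ℕ) ≤ m := (par_le_iff G hconn hlf hmono).mpr h.2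
        have h1 : kthLargest f ((i : ℕ+) : ℕ) ≤ t :=
          (vals_le_iff hf (by omega) htpos).mpr h.1
        have h2 : t < kthLargest f (par G ((i : ℕ+) : ℕ)) :=
          (lt_vals_iff hf hpar1 htpos).mpr hparle
        have hΨi : (Ψ i : G.edgeSet) = ⟨s(u ((i : ℕ+) : ℕ), w ((i : ℕ+) : ℕ)), (hprop _ h).1⟩ := by
          rw [hΨ]; exact dif_pos h
        rw [hΨi]
        have hcoe : ((⟨s(u ((i : ℕ+) : ℕ), w ((i : ℕ+) : ℕ)), (hprop _ h).1⟩ : G.edgeSet) : Sym2 V)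
            = s(u ((i : ℕ+) : ℕ), w ((i : ℕ+) : ℕ)) := rfl
        rw [hcoe]
        have hhf : hfun f p s(u ((i : ℕ+) : ℕ), w ((i : ℕ+) : ℕ))
            = hker f p (u ((i : ℕ+) : ℕ)) (w ((i : ℕ+) : ℕ)) := by
          unfold hfun; rw [Sym2.lift_mk]
        rw [hhf]
        have hwu : f (w ((i : ℕ+) : ℕ)) ≤ f (u ((i : ℕ+) : ℕ)) := le_trans hwle hut.le
        have hmin : min (f (u ((i : ℕ+) : ℕ))) (f (w ((i : ℕ+) : ℕ))) = f (w ((i : ℕ+) : ℕ)) :=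
          min_eq_right hwu
        have hmax : max (f (u ((i : ℕ+) : ℕ))) (f (w ((i : ℕ+) : ℕ))) = f (u ((i : ℕ+) : ℕ)) :=
          max_eq_left hwu
        rw [gfun, hker, hmin, hmax,
          Set.indicator_of_mem (Set.mem_Ico.mpr ⟨h1, h2⟩),
          Set.indicator_of_mem (Set.mem_Ico.mpr ⟨hwle, hut⟩)]
        apply ENNReal.ofReal_le_ofReal
        apply mul_le_mul_of_nonneg_left _ (by linarith : (0:ℝ) ≤ p)
        apply Real.rpow_le_rpow (by linarith) (by linarith) (by linarith)
      refine le_trans (Finset.sum_le_sum hbound) ?_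
      have hinjF : ∀ i ∈ hfin.toFinset, ∀ j ∈ hfin.toFinset, Ψ i = Ψ j → i = j := by
        intro i hi j hj hij
        have hmi : ((i : ℕ+) : ℕ) ∈ Set.Ioc m (EE G m) := by simpa using hi
        have hmj : ((j : ℕ+) : ℕ) ∈ Set.Ioc m (EE G m) := by simpa using hj
        rw [hΨ] at hij
        simp only [dif_pos hmi, dif_pos hmj, Subtype.mk_eq_mk, Sym2.eq_iff] at hij
        obtain ⟨hpi2, hwi, hui, hti⟩ := hprop _ hmi
        obtain ⟨hpj2, hwj, huj, htj⟩ := hprop _ hmj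
        replace hij := Sym2.eq_iff.mp (congrArg Subtype.val hij)
        rcases hij with ⟨h1, h2⟩ | ⟨h1, h2⟩
        · exact Subtype.ext (PNat.coe_injective (hinj hmi hmj h2))
        · exfalso
          rw [h1] at hti
          linarith
      rw [← Finset.sum_image (f := fun e : G.edgeSet => hfun f p (e : Sym2 V) t)
        (g := Ψ) hinjF]
      exact ENNReal.sum_le_tsum _
    · have hzero : ∀ i : {i : ℕ+ // 2 ≤ (i : ℕ)}, gfun G f p ((i : ℕ+) : ℕ) t = 0 := by
        intro i
        apply hvan
        intro hmem
        have h1 := hmem.2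
        have hm0 : m = 0 := by omega
        rw [hm0, EE_zero] at h1
        have := i.2
        have := hmem.1
        omega
      rw [tsum_congr hzero, tsum_zero]
      exact zero_le

end S7

set_option maxHeartbeats 1000000 in
open MeasureTheory in
/-- **Comparison Lemma.**  Let `G` be a connected graph with countably infinite vertex
set, all of whose vertices have finite degree, and whose isoperimetric numbers satisfy
`∂_V^{n+1} ≥ ∂_V^n` for all `n ≥ 1`.  Let `f : V → ℝ_{≥0}` vanish at infinity and let
`f_c (k) = k`-th largest value of `f` be its comparison function on the universal
comparison graph `G_c`.  Then for every `p ≥ 1`,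
`Σ_{(x,y) ∈ E_c} |f_c x - f_c y|^p ≤ Σ_{(x,y) ∈ E} |f x - f y|^p`. -/
theorem comparison_lemma {V : Type*} [Countable V] [Infinite V]
    (G : SimpleGraph V) (hconn : G.Connected)
    (hlf : ∀ x : V, (G.neighborSet x).Finite)
    (hmono : ∀ n : ℕ, 1 ≤ n → isoNum G n ≤ isoNum G (n + 1))
    (f : V → ℝ) (hpos : ∀ x, 0 ≤ f x) (hf : VanishesAtInfinity f)
    (p : ℝ) (hp : 1 ≤ p) :
    gradPPow (comparisonGraph G) (fun k : ℕ+ => kthLargest f (k : ℕ)) p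
      ≤ gradPPow G f p := by
  rw [lhs_formula G hconn hlf hmono f hf p]
  have hterm : ∀ i : {i : ℕ+ // 2 ≤ (i : ℕ)},
      ENNReal.ofReal ((kthLargest f (par G ((i : ℕ+) : ℕ)) - kthLargest f ((i : ℕ+) : ℕ)) ^ p)
        = ∫⁻ t, gfun G f p ((i : ℕ+) : ℕ) t := by
    intro i
    have hi2 : 2 ≤ ((i : ℕ+) : ℕ) := i.2
    have hpar1 : 1 ≤ par G ((i : ℕ+) : ℕ) := one_le_par G hconn hlf hi2
    have hparlt : par G ((i : ℕ+) : ℕ) ≤ ((i : ℕ+) : ℕ) := (par_lt G hconn hlf hi2).le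
    have h0 : 0 ≤ kthLargest f ((i : ℕ+) : ℕ) := vals_nonneg hf _ (by omega)
    have hyx : kthLargest f ((i : ℕ+) : ℕ) ≤ kthLargest f (par G ((i : ℕ+) : ℕ)) :=
      vals_antitone hf hpar1 hparlt
    exact (key_integral hp h0 hyx).symm
  rw [tsum_congr hterm]
  rw [← lintegral_tsum (fun i => (gfun_meas G f hp _).aemeasurable)]
  have hRHS : gradPPow G f p = ∫⁻ t, ∑' (e : G.edgeSet), hfun f p (e : Sym2 V) t := by
    rw [gradPPow, lintegral_tsum (fun e => (hfun_meas f hp _).aemeasurable)]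
    apply tsum_congr
    rintro ⟨e, he⟩
    induction e with
    | _ a b =>
      have hcoe : ((⟨s(a, b), he⟩ : G.edgeSet) : Sym2 V) = s(a, b) := rfl
      rw [hcoe, Sym2.lift_mk]
      have hhf : ∀ t, hfun f p s(a, b) t = hker f p a b t := by
        intro t; unfold hfun; rw [Sym2.lift_mk]
      simp only [hhf]
      unfold hker
      rw [key_integral hp (le_min (hpos a) (hpos b)) min_le_max]
      congr 2
      rw [max_sub_min_eq_abs, abs_sub_comm]
  rw [hRHS]
  apply lintegral_mono_ae
  have hae : ∀ᵐ (t : ℝ), t ≠ (0:ℝ) := by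
    rw [MeasureTheory.ae_iff]
    have hset : {t : ℝ | ¬ t ≠ 0} = {(0:ℝ)} := by ext s; simp
    rw [hset]
    exact Real.volume_singleton
  exact hae.mono (fun t ht => pointwise G hconn hlf hmono hpos hf hp ht)
end
end

section
/- (Modified Coarea Formula) Let G = (V,E) be a graph in which every vertex has finite degree, let f : V → ℝ_{≥0} vanish at infinity, and let 1 ≤ p < ∞. Then Σ_{x∼y} |f(x) − f(y)|^p = p · ∫_0^∞ Σ_{(x,y) ∈ ∂_E{f ≥ s}} |min(f(x), s) − min(f(y), s)|^{p−1} ds, where ∂_E{f ≥ s} denotes the set of edges of G having exactly one endpoint in {v ∈ V : f(v) ≥ s} (for p = 1 the integrand counts the edges of the cut). -/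
open scoped ENNReal Classical

noncomputable section

/-- The contribution of an edge to the cut `∂_E{f ≥ s}`:  the value
`|min(f x, s) - min(f y, s)|^{p-1}` if the edge has exactly one endpoint in
`{v : f v ≥ s}`, and `0` otherwise. -/
def cutVal {V : Type*} (f : V → ℝ) (p s : ℝ) : Sym2 V → ℝ≥0∞ :=
  Sym2.lift
    ⟨fun x y =>
      if (s ≤ f x ∧ f y < s) ∨ (s ≤ f y ∧ f x < s)
      then ENNReal.ofReal (|min (f x) s - min (f y) s| ^ (p - 1))
      else 0,
    fun x y => by
      dsimp only
      rw [abs_sub_comm (min (f x) s) (min (f y) s)]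
      exact if_congr or_comm rfl rfl⟩

open MeasureTheory Set
lemma cutVal_measurable {V : Type*} (f : V → ℝ) (p : ℝ) (hp : 1 ≤ p) (z : Sym2 V) :
    Measurable fun t : ℝ => cutVal f p t z := by
  induction z using Sym2.ind with
  | _ x y =>
    simp only [cutVal, Sym2.lift_mk]
    have hset : MeasurableSet {t : ℝ | (t ≤ f x ∧ f y < t) ∨ (t ≤ f y ∧ f x < t)} := by
      have : {t : ℝ | (t ≤ f x ∧ f y < t) ∨ (t ≤ f y ∧ f x < t)}
          = Ioc (f y) (f x) ∪ Ioc (f x) (f y) := by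
        ext t; simp only [Set.mem_setOf_eq, Set.mem_union, Set.mem_Ioc]; tauto
      rw [this]
      exact measurableSet_Ioc.union measurableSet_Ioc
    refine Measurable.ite hset ?_ measurable_const
    refine ENNReal.measurable_ofReal.comp ?_
    refine (Continuous.rpow_const ?_ fun t => Or.inr (by linarith)).measurable
    exact ((continuous_const.min continuous_id).sub (continuous_const.min continuous_id)).abs

lemma core_integral (a b p : ℝ) (hp : 1 ≤ p) (hab : a ≤ b) :
    ∫⁻ t in Set.Ioc a b, ENNReal.ofReal ((t - a) ^ (p - 1))
      = ENNReal.ofReal ((b - a) ^ p / p) := by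
  have hp0 : (0:ℝ) < p := lt_of_lt_of_le one_pos hp
  have hint : IntervalIntegrable (fun u : ℝ => u ^ (p - 1)) volume 0 (b - a) :=
    intervalIntegral.intervalIntegrable_rpow' (by linarith)
  have hint2 : IntervalIntegrable (fun t : ℝ => (t - a) ^ (p - 1)) volume a b := by
    have := hint.comp_sub_right a
    simpa using this
  have hIOn : IntegrableOn (fun t : ℝ => (t - a) ^ (p - 1)) (Set.Ioc a b) :=
    (intervalIntegrable_iff_integrableOn_Ioc_of_le hab).mp hint2
  have hnn : 0 ≤ᵐ[volume.restrict (Set.Ioc a b)] fun t : ℝ => (t - a) ^ (p - 1) := by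
    rw [Filter.EventuallyLE, ae_restrict_iff' measurableSet_Ioc]
    exact ae_of_all _ fun t ht => Real.rpow_nonneg (by linarith [ht.1]) _
  rw [← MeasureTheory.ofReal_integral_eq_lintegral_ofReal hIOn hnn]
  congr 1
  rw [← intervalIntegral.integral_of_le hab,
    intervalIntegral.integral_comp_sub_right (fun u => u ^ (p - 1)) a,
    integral_rpow (Or.inl (by linarith))]
  rw [sub_self, Real.zero_rpow (by linarith), sub_add_cancel, sub_zero]

lemma edge_int {V : Type*} (f : V → ℝ) (p : ℝ) (hp : 1 ≤ p) (x y : V)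
    (hy : 0 ≤ f y) (hyx : f y ≤ f x) :
    ∫⁻ t in Set.Ioi (0:ℝ), cutVal f p t s(x, y)
      = ENNReal.ofReal ((f x - f y) ^ p / p) := by
  have h1 : ∀ t ∈ Set.Ioi (0:ℝ), cutVal f p t s(x, y)
      = Set.indicator (Set.Ioc (f y) (f x))
          (fun t => ENNReal.ofReal ((t - f y) ^ (p - 1))) t := by
    intro t ht
    simp only [cutVal, Sym2.lift_mk]
    by_cases h : t ∈ Set.Ioc (f y) (f x)
    · rw [Set.indicator_of_mem h, if_pos (Or.inl ⟨h.2, h.1⟩),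
        min_eq_right h.2, min_eq_left h.1.le, abs_of_nonneg (by linarith [h.1])]
    · rw [Set.indicator_of_notMem h, if_neg]
      rintro (⟨h1, h2⟩ | ⟨h1, h2⟩)
      · exact h ⟨h2, h1⟩
      · linarith
  rw [setLIntegral_congr_fun measurableSet_Ioi h1,
    lintegral_indicator measurableSet_Ioc,
    Measure.restrict_restrict measurableSet_Ioc,
    Set.inter_eq_self_of_subset_left
      (show Set.Ioc (f y) (f x) ⊆ Set.Ioi (0:ℝ) from fun t ht => lt_of_le_of_lt hy ht.1)]
  exact core_integral (f y) (f x) p hp hyx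

lemma edge_eq {V : Type*} (f : V → ℝ) (p : ℝ) (hp : 1 ≤ p) (x y : V)
    (hx : 0 ≤ f x) (hy : 0 ≤ f y) :
    ENNReal.ofReal (|f x - f y| ^ p)
      = ENNReal.ofReal p * ∫⁻ t in Set.Ioi (0:ℝ), cutVal f p t s(x, y) := by
  have hp0 : (0:ℝ) < p := lt_of_lt_of_le one_pos hp
  rcases le_total (f y) (f x) with h | h
  · rw [edge_int f p hp x y hy h, ← ENNReal.ofReal_mul hp0.le]
    congr 1
    rw [abs_of_nonneg (by linarith)]
    field_simp
  · rw [Sym2.eq_swap, edge_int f p hp y x hx h, ← ENNReal.ofReal_mul hp0.le]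
    congr 1
    rw [abs_sub_comm, abs_of_nonneg (by linarith)]
    field_simp


/-- **Modified Coarea Formula.**  Let `G` be a graph all of whose vertices have finite
degree, let `f : V → ℝ_{≥0}` vanish at infinity and let `1 ≤ p < ∞`.  Then
`Σ_{x∼y} |f x - f y|^p
  = p · ∫_0^∞ Σ_{(x,y) ∈ ∂_E{f ≥ s}} |min(f x, s) - min(f y, s)|^{p-1} ds`
(for `p = 1` the integrand counts the edges of the cut). -/
theorem modified_coarea_formula {V : Type*} (G : SimpleGraph V)
    (hlf : ∀ x : V, (G.neighborSet x).Finite)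
    (f : V → ℝ) (hpos : ∀ x, 0 ≤ f x) (hf : VanishesAtInfinity f)
    (p : ℝ) (hp : 1 ≤ p) :
    gradPPow G f p
      = ENNReal.ofReal p *
          ∫⁻ s in Set.Ioi (0 : ℝ), ∑' e : G.edgeSet, cutVal f p s (e : Sym2 V) := by
  classical
  have hp0 : (0:ℝ) < p := lt_of_lt_of_le one_pos hp
  -- countability setup
  set S : Set V := {v | f v ≠ 0} with hS
  have hScount : S.Countable := by
    have hsub : S ⊆ ⋃ n : ℕ, {v : V | 1 / (n + 1 : ℝ) < |f v|} := by
      intro v hv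
      obtain ⟨n, hn⟩ := exists_nat_one_div_lt (abs_pos.mpr hv)
      exact Set.mem_iUnion.mpr ⟨n, hn⟩
    exact (Set.countable_iUnion fun n => (hf _ (by positivity)).countable).mono hsub
  set T : Set (Sym2 V) := ⋃ v ∈ S, (fun w => s(v, w)) '' G.neighborSet v with hT
  have hTcount : T.Countable :=
    Set.Countable.biUnion hScount fun v _ => ((hlf v).image _).countable
  have hmemT : ∀ x y : V, G.Adj x y → f x ≠ 0 → s(x, y) ∈ T := by
    intro x y hadj hx
    exact Set.mem_biUnion hx ⟨y, hadj, rfl⟩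
  set E0 : Set G.edgeSet := Subtype.val ⁻¹' T with hE0
  have hE0count : E0.Countable := hTcount.preimage Subtype.val_injective
  haveI := hE0count.to_subtype
  have hboth : ∀ x y : V, s(x, y) ∈ G.edgeSet → s(x, y) ∉ T → f x = 0 ∧ f y = 0 := by
    intro x y hz hnT
    constructor
    · by_contra hx
      exact hnT (hmemT x y (G.mem_edgeSet.mp hz) hx)
    · by_contra hy
      refine hnT ?_
      rw [Sym2.eq_swap]
      exact hmemT y x (G.mem_edgeSet.mp hz).symm hy
  have hzero2 : ∀ z : Sym2 V, z ∈ G.edgeSet → z ∉ T → ∀ t : ℝ, cutVal f p t z = 0 := by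
    intro z
    induction z using Sym2.ind with
    | _ x y =>
      intro hz hnT t
      obtain ⟨hx, hy⟩ := hboth x y hz hnT
      simp only [cutVal, Sym2.lift_mk, hx, hy]
      rw [if_neg]
      rintro (⟨h1, h2⟩ | ⟨h1, h2⟩) <;> linarith
  -- per-edge identity
  have hstep1 : gradPPow G f p
      = ∑' e : G.edgeSet,
          ENNReal.ofReal p * ∫⁻ t in Set.Ioi (0:ℝ), cutVal f p t (e : Sym2 V) := by
    unfold gradPPow
    refine tsum_congr fun e => ?_
    have key : ∀ z : Sym2 V,
        Sym2.lift ⟨fun x y => ENNReal.ofReal (|f x - f y| ^ p),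
          fun x y => by dsimp only; rw [abs_sub_comm]⟩ z
        = ENNReal.ofReal p * ∫⁻ t in Set.Ioi (0:ℝ), cutVal f p t z := by
      intro z
      induction z using Sym2.ind with
      | _ x y => simpa using edge_eq f p hp x y (hpos x) (hpos y)
    exact key _
  rw [hstep1, ENNReal.tsum_mul_left]
  congr 1
  -- swap sum and integral via countable support
  have hsupp3 : ∀ t : ℝ,
      Function.support (fun e : G.edgeSet => cutVal f p t (e : Sym2 V)) ⊆ E0 := by
    intro t e he
    by_contra hne
    exact he (hzero2 e.val e.prop hne t)
  have hsupp2 : Function.support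
      (fun e : G.edgeSet => ∫⁻ t in Set.Ioi (0:ℝ), cutVal f p t (e : Sym2 V)) ⊆ E0 := by
    intro e he
    by_contra hne
    apply he
    have h0 : ∀ t : ℝ, cutVal f p t (e : Sym2 V) = 0 := hzero2 e.val e.prop hne
    simp only [h0, lintegral_zero]
  calc ∑' e : G.edgeSet, ∫⁻ t in Set.Ioi (0:ℝ), cutVal f p t (e : Sym2 V)
      = ∑' e : E0, ∫⁻ t in Set.Ioi (0:ℝ), cutVal f p t ((e : G.edgeSet) : Sym2 V) :=
        (tsum_subtype_eq_of_support_subset hsupp2).symm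
    _ = ∫⁻ t in Set.Ioi (0:ℝ), ∑' e : E0, cutVal f p t ((e : G.edgeSet) : Sym2 V) :=
        (lintegral_tsum fun e => (cutVal_measurable f p hp _).aemeasurable).symm
    _ = ∫⁻ t in Set.Ioi (0:ℝ), ∑' e : G.edgeSet, cutVal f p t (e : Sym2 V) :=
        lintegral_congr fun t => tsum_subtype_eq_of_support_subset (hsupp3 t)
end
end

section
/- Let ∂_V^n be the isoperimetric number of the lattice graph (ℤ², ℓ¹). Then ∂_V^{n+1} ≥ ∂_V^n for all n ≥ 1, and for every integer k ≥ 0, if n = 2k(k+1) + 1 then ∂_V^n = 4k + 4. -/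
open scoped ENNReal Classical

noncomputable section

namespace IsoAux

def nbrs (p : ℤ × ℤ) : Finset (ℤ × ℤ) :=
  {(p.1+1, p.2), (p.1-1, p.2), (p.1, p.2+1), (p.1, p.2-1)}

lemma adj_iff {z x : ℤ × ℤ} : latticeZ2.Adj z x ↔ z ∈ nbrs x := by
  obtain ⟨z1, z2⟩ := z; obtain ⟨x1, x2⟩ := x
  show |z1 - x1| + |z2 - x2| = 1 ↔ _
  simp only [nbrs, Finset.mem_insert, Finset.mem_singleton, Prod.ext_iff]
  rw [Int.abs_eq_natAbs, Int.abs_eq_natAbs]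
  omega

lemma adj_iff' {z x : ℤ × ℤ} :
    latticeZ2.Adj z x ↔ (z.1 - x.1).natAbs + (z.2 - x.2).natAbs = 1 := by
  rw [adj_iff]
  obtain ⟨z1, z2⟩ := z; obtain ⟨x1, x2⟩ := x
  simp only [nbrs, Finset.mem_insert, Finset.mem_singleton, Prod.ext_iff]
  omega

def bdF (X : Finset (ℤ × ℤ)) : Finset (ℤ × ℤ) := (X.biUnion nbrs) \ X

lemma mem_bdF {X : Finset (ℤ × ℤ)} {z : ℤ × ℤ} :
    z ∈ bdF X ↔ z ∉ X ∧ ∃ x ∈ X, latticeZ2.Adj z x := by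
  simp only [bdF, Finset.mem_sdiff, Finset.mem_biUnion]
  constructor
  · rintro ⟨⟨x, hx, hz⟩, hzx⟩; exact ⟨hzx, x, hx, adj_iff.2 hz⟩
  · rintro ⟨hzx, x, hx, hadj⟩; exact ⟨⟨x, hx, adj_iff.1 hadj⟩, hzx⟩

lemma vb_coe (X : Finset (ℤ × ℤ)) :
    vertexBoundary latticeZ2 (↑X) = ↑(bdF X) := by
  ext z; simp [vertexBoundary, mem_bdF]

/-- The isoperimetric set, Finset version. -/
lemma iso_set_eq (n : ℕ) :
    {m : ℕ | ∃ X : Set (ℤ×ℤ), X.Finite ∧ X.ncard = n ∧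
      (vertexBoundary latticeZ2 X).Finite ∧ (vertexBoundary latticeZ2 X).ncard = m}
    = {m : ℕ | ∃ Y : Finset (ℤ×ℤ), Y.card = n ∧ (bdF Y).card = m} := by
  ext m
  constructor
  · rintro ⟨X, hfin, hcard, hbfin, hbcard⟩
    refine ⟨hfin.toFinset, ?_, ?_⟩
    · rw [← hcard, Set.ncard_eq_toFinset_card X hfin]
    · have h2 : vertexBoundary latticeZ2 X = ↑(bdF hfin.toFinset) := by
        conv_lhs => rw [← hfin.coe_toFinset]
        exact vb_coe _
      rw [← hbcard, h2, Set.ncard_coe_finset]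
  · rintro ⟨Y, hcard, hbcard⟩
    refine ⟨↑Y, Y.finite_toSet, ?_, ?_, ?_⟩
    · rw [Set.ncard_coe_finset]; exact hcard
    · rw [vb_coe]; exact (bdF Y).finite_toSet
    · rw [vb_coe, Set.ncard_coe_finset]; exact hbcard

lemma iso_eq (n : ℕ) :
    isoNum latticeZ2 n = sInf {m : ℕ | ∃ Y : Finset (ℤ×ℤ), Y.card = n ∧ (bdF Y).card = m} := by
  rw [isoNum, iso_set_eq]

end IsoAux
namespace IsoAux

def colF (S : Finset (ℤ × ℤ)) (c : ℤ) : Finset (ℤ × ℤ) := S.filter (fun p => p.1 + p.2 = c)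

lemma mem_colF {S : Finset (ℤ×ℤ)} {c : ℤ} {p : ℤ×ℤ} :
    p ∈ colF S c ↔ p ∈ S ∧ p.1 + p.2 = c := by simp [colF]

section Core

variable {X B : Finset (ℤ × ℤ)}
  (hB : ∀ z x : ℤ × ℤ, x ∈ X → latticeZ2.Adj z x → z ∉ X → z ∈ B)
  (hd : ∀ z : ℤ × ℤ, z ∈ B → z ∉ X)

include hB hd in
lemma star1 (c : ℤ) (h : (colF X (c+1)).Nonempty) :
    (colF X (c+1)).card + 1 ≤ (colF X c).card + (colF B c).card := by
  obtain ⟨m, hm, hmin⟩ := Finset.exists_min_image (colF X (c+1)) (fun p => p.1) h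
  set T : Finset (ℤ×ℤ) :=
    insert (m.1 - 1, m.2) ((colF X (c+1)).image (fun p => (p.1, p.2 - 1))) with hT
  have hTcard : T.card = (colF X (c+1)).card + 1 := by
    rw [hT, Finset.card_insert_of_notMem, Finset.card_image_of_injOn]
    · intro p _ q _ hpq
      simp only [Prod.ext_iff] at hpq ⊢
      exact ⟨hpq.1, by linarith [hpq.2]⟩
    · intro hmem
      obtain ⟨p, hp, hpe⟩ := Finset.mem_image.1 hmem
      have := hmin p hp
      simp only [Prod.ext_iff] at hpe
      omega
  have hTsub : T ⊆ colF X c ∪ colF B c := by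
    intro t ht
    have key : ∃ x ∈ colF X (c+1), latticeZ2.Adj t x ∧ t.1 + t.2 = c := by
      rw [hT, Finset.mem_insert] at ht
      rcases ht with h1 | h1
      · refine ⟨m, hm, ?_, ?_⟩
        · rw [adj_iff']
          have hm2 := (mem_colF.1 hm).2
          subst h1; first | (simp; omega) | simp
        · have hm2 := (mem_colF.1 hm).2
          subst h1; first | (simp; omega) | simp
      · obtain ⟨p, hp, hpe⟩ := Finset.mem_image.1 h1
        refine ⟨p, hp, ?_, ?_⟩
        · rw [adj_iff']
          have hp2 := (mem_colF.1 hp).2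
          subst hpe; first | (simp; omega) | simp
        · have hp2 := (mem_colF.1 hp).2
          subst hpe; first | (simp; omega) | simp
    obtain ⟨x, hx, hadj, hsum⟩ := key
    by_cases htX : t ∈ X
    · exact Finset.mem_union_left _ (mem_colF.2 ⟨htX, hsum⟩)
    · exact Finset.mem_union_right _
        (mem_colF.2 ⟨hB t x (mem_colF.1 hx).1 hadj htX, hsum⟩)
  calc (colF X (c+1)).card + 1 = T.card := hTcard.symm
    _ ≤ (colF X c ∪ colF B c).card := Finset.card_le_card hTsub
    _ ≤ (colF X c).card + (colF B c).card := Finset.card_union_le _ _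

include hB hd in
lemma star2 (c : ℤ) (h : (colF X c).Nonempty) :
    (colF X c).card + 1 ≤ (colF X (c+1)).card + (colF B (c+1)).card := by
  obtain ⟨m, hm, hmin⟩ := Finset.exists_min_image (colF X c) (fun p => p.1) h
  set T : Finset (ℤ×ℤ) :=
    insert (m.1, m.2 + 1) ((colF X c).image (fun p => (p.1 + 1, p.2))) with hT
  have hTcard : T.card = (colF X c).card + 1 := by
    rw [hT, Finset.card_insert_of_notMem, Finset.card_image_of_injOn]
    · intro p _ q _ hpq
      simp only [Prod.ext_iff] at hpq ⊢
      exact ⟨by linarith [hpq.1], hpq.2⟩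
    · intro hmem
      obtain ⟨p, hp, hpe⟩ := Finset.mem_image.1 hmem
      have := hmin p hp
      simp only [Prod.ext_iff] at hpe
      omega
  have hTsub : T ⊆ colF X (c+1) ∪ colF B (c+1) := by
    intro t ht
    have key : ∃ x ∈ colF X c, latticeZ2.Adj t x ∧ t.1 + t.2 = c + 1 := by
      rw [hT, Finset.mem_insert] at ht
      rcases ht with h1 | h1
      · refine ⟨m, hm, ?_, ?_⟩
        · rw [adj_iff']
          subst h1; first | (simp; omega) | simp
        · have hm2 := (mem_colF.1 hm).2
          subst h1; first | (simp; omega) | simp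
      · obtain ⟨p, hp, hpe⟩ := Finset.mem_image.1 h1
        refine ⟨p, hp, ?_, ?_⟩
        · rw [adj_iff']
          subst hpe; first | (simp; omega) | simp
        · have hp2 := (mem_colF.1 hp).2
          subst hpe; first | (simp; omega) | simp
    obtain ⟨x, hx, hadj, hsum⟩ := key
    by_cases htX : t ∈ X
    · exact Finset.mem_union_left _ (mem_colF.2 ⟨htX, hsum⟩)
    · exact Finset.mem_union_right _
        (mem_colF.2 ⟨hB t x (mem_colF.1 hx).1 hadj htX, hsum⟩)
  calc (colF X c).card + 1 = T.card := hTcard.symm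
    _ ≤ (colF X (c+1) ∪ colF B (c+1)).card := Finset.card_le_card hTsub
    _ ≤ (colF X (c+1)).card + (colF B (c+1)).card := Finset.card_union_le _ _

end Core

end IsoAux
namespace IsoAux

lemma split_le (S : Finset (ℤ×ℤ)) (c : ℤ) :
    (S.filter (fun p => p.1+p.2 ≤ c+1)).card
      = (S.filter (fun p => p.1+p.2 ≤ c)).card + (colF S (c+1)).card := by
  rw [← Finset.card_union_of_disjoint]
  · congr 1
    ext p
    simp only [Finset.mem_union, Finset.mem_filter, mem_colF]
    constructor
    · rintro ⟨hp, hle⟩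
      rcases eq_or_lt_of_le hle with h | h
      · exact Or.inr ⟨hp, h⟩
      · exact Or.inl ⟨hp, by omega⟩
    · rintro (⟨hp, h⟩ | ⟨hp, h⟩) <;> exact ⟨hp, by omega⟩
  · simp only [Finset.disjoint_left, Finset.mem_filter, mem_colF]
    rintro p ⟨_, h1⟩ ⟨_, h2⟩
    omega

lemma split_ge (S : Finset (ℤ×ℤ)) (c : ℤ) :
    (S.filter (fun p => c ≤ p.1+p.2)).card
      = (S.filter (fun p => c+1 ≤ p.1+p.2)).card + (colF S c).card := by
  rw [← Finset.card_union_of_disjoint]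
  · congr 1
    ext p
    simp only [Finset.mem_union, Finset.mem_filter, mem_colF]
    constructor
    · rintro ⟨hp, hle⟩
      rcases eq_or_lt_of_le hle with h | h
      · exact Or.inr ⟨hp, h.symm⟩
      · exact Or.inl ⟨hp, by omega⟩
    · rintro (⟨hp, h⟩ | ⟨hp, h⟩) <;> exact ⟨hp, by omega⟩
  · simp only [Finset.disjoint_left, Finset.mem_filter, mem_colF]
    rintro p ⟨_, h1⟩ ⟨_, h2⟩
    omega

lemma osplit_le (O : Finset ℤ) (c : ℤ) :
    (O.filter (fun e => e ≤ c+1)).card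
      = (O.filter (fun e => e ≤ c)).card + (if c+1 ∈ O then 1 else 0) := by
  have hu : O.filter (fun e => e ≤ c+1) = O.filter (fun e => e ≤ c) ∪ O.filter (fun e => e = c+1) := by
    ext e
    simp only [Finset.mem_union, Finset.mem_filter]
    by_cases he : e ∈ O <;> simp [he] <;> omega
  have hdisj : Disjoint (O.filter (fun e => e ≤ c)) (O.filter (fun e => e = c+1)) := by
    simp only [Finset.disjoint_left, Finset.mem_filter]
    rintro e ⟨_, h1⟩ ⟨_, h2⟩
    omega
  rw [hu, Finset.card_union_of_disjoint hdisj, Finset.filter_eq']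
  split <;> simp

lemma osplit_ge (O : Finset ℤ) (c : ℤ) :
    (O.filter (fun e => c ≤ e)).card
      = (O.filter (fun e => c+1 ≤ e)).card + (if c ∈ O then 1 else 0) := by
  have hu : O.filter (fun e => c ≤ e) = O.filter (fun e => c+1 ≤ e) ∪ O.filter (fun e => e = c) := by
    ext e
    simp only [Finset.mem_union, Finset.mem_filter]
    by_cases he : e ∈ O <;> simp [he] <;> omega
  have hdisj : Disjoint (O.filter (fun e => c+1 ≤ e)) (O.filter (fun e => e = c)) := by
    simp only [Finset.disjoint_left, Finset.mem_filter]
    rintro e ⟨_, h1⟩ ⟨_, h2⟩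
    omega
  rw [hu, Finset.card_union_of_disjoint hdisj, Finset.filter_eq']
  split <;> simp

section Core2

variable {X B : Finset (ℤ × ℤ)}
  (hB : ∀ z x : ℤ × ℤ, x ∈ X → latticeZ2.Adj z x → z ∉ X → z ∈ B)
  (hd : ∀ z : ℤ × ℤ, z ∈ B → z ∉ X)
  (hX : X.Nonempty)

lemma occ_nonempty (hX : X.Nonempty) : (X.image (fun p => p.1 + p.2)).Nonempty :=
  hX.image _

lemma col_nonempty_of_occ {c : ℤ} (hc : c ∈ X.image (fun p => p.1 + p.2)) :
    (colF X c).Nonempty := by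
  obtain ⟨p, hp, hpc⟩ := Finset.mem_image.1 hc
  exact ⟨p, mem_colF.2 ⟨hp, hpc⟩⟩

include hB hd hX in
lemma invL : ∀ c : ℤ, (X.image (fun p => p.1 + p.2)).min' (occ_nonempty hX) - 1 ≤ c →
    (colF X (c+1)).card + ((X.image (fun p => p.1 + p.2)).filter (fun e => e ≤ c)).card + 1
      ≤ (B.filter (fun p => p.1+p.2 ≤ c)).card := by
  set O := X.image (fun p => p.1 + p.2) with hO
  set cmin := O.min' (occ_nonempty hX) with hcmin
  refine Int.le_induction ?_ ?_
  · -- base c = cmin - 1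
    have h1 : O.filter (fun e => e ≤ cmin - 1) = ∅ := by
      apply Finset.filter_eq_empty_iff.2
      intro e he
      have := O.min'_le e he
      omega
    have h2 : cmin - 1 + 1 = cmin := by ring
    rw [h1, h2]
    have hcol : (colF X cmin).Nonempty := col_nonempty_of_occ (O.min'_mem _)
    have hstar := star1 hB hd (cmin - 1) (by rwa [h2])
    have hempty : colF X (cmin - 1) = ∅ := by
      rw [Finset.eq_empty_iff_forall_notMem]
      intro p hp
      obtain ⟨hpX, hps⟩ := mem_colF.1 hp
      have : p.1 + p.2 ∈ O := Finset.mem_image_of_mem _ hpX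
      have := O.min'_le _ this
      omega
    rw [h2, hempty] at hstar
    simp only [Finset.card_empty, zero_add] at hstar
    have hsub : colF B (cmin - 1) ⊆ B.filter (fun p => p.1+p.2 ≤ cmin - 1) := by
      intro p hp
      obtain ⟨hpB, hps⟩ := mem_colF.1 hp
      exact Finset.mem_filter.2 ⟨hpB, by omega⟩
    have := Finset.card_le_card hsub
    simp only [Finset.card_empty]
    omega
  · -- step
    intro c _ IH
    have hsplit := split_le B c
    have hocc := osplit_le O c
    have hmain : (colF X (c+1+1)).card + (if c+1 ∈ O then 1 else 0)
        ≤ (colF X (c+1)).card + (colF B (c+1)).card := by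
      by_cases hne : (colF X (c+1+1)).Nonempty
      · have := star1 hB hd (c+1) hne
        split <;> omega
      · have h0 : (colF X (c+1+1)).card = 0 := by
          rw [Finset.not_nonempty_iff_eq_empty.1 hne]; rfl
        rw [h0]
        split
        · next h =>
          have := Finset.card_pos.2 (col_nonempty_of_occ (c := c+1) h)
          omega
        · omega
    simp only [← hO] at IH hocc hmain ⊢
    omega

include hB hd hX in
lemma invR : ∀ c : ℤ, c ≤ (X.image (fun p => p.1 + p.2)).max' (occ_nonempty hX) + 1 →
    (colF X (c-1)).card + ((X.image (fun p => p.1 + p.2)).filter (fun e => c ≤ e)).card + 1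
      ≤ (B.filter (fun p => c ≤ p.1+p.2)).card := by
  set O := X.image (fun p => p.1 + p.2) with hO
  set cmax := O.max' (occ_nonempty hX) with hcmax
  refine Int.le_induction_down ?_ ?_
  · -- base c = cmax + 1
    have h1 : O.filter (fun e => cmax + 1 ≤ e) = ∅ := by
      apply Finset.filter_eq_empty_iff.2
      intro e he
      have := O.le_max' e he
      omega
    have h2 : cmax + 1 - 1 = cmax := by ring
    rw [h1, h2]
    have hcol : (colF X cmax).Nonempty := col_nonempty_of_occ (O.max'_mem _)
    have hstar := star2 hB hd cmax hcol
    have hempty : colF X (cmax + 1) = ∅ := by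
      rw [Finset.eq_empty_iff_forall_notMem]
      intro p hp
      obtain ⟨hpX, hps⟩ := mem_colF.1 hp
      have : p.1 + p.2 ∈ O := Finset.mem_image_of_mem _ hpX
      have := O.le_max' _ this
      omega
    rw [hempty] at hstar
    simp only [Finset.card_empty, zero_add] at hstar
    have hsub : colF B (cmax + 1) ⊆ B.filter (fun p => cmax + 1 ≤ p.1+p.2) := by
      intro p hp
      obtain ⟨hpB, hps⟩ := mem_colF.1 hp
      exact Finset.mem_filter.2 ⟨hpB, by omega⟩
    have := Finset.card_le_card hsub
    simp only [Finset.card_empty]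
    omega
  · -- step downward
    intro c _ IH
    have hsplit := split_ge B (c-1)
    have hocc := osplit_ge O (c-1)
    have hstep : c - 1 + 1 = c := by ring
    rw [hstep] at hsplit hocc
    have hmain : (colF X (c-1-1)).card + (if c-1 ∈ O then 1 else 0)
        ≤ (colF X (c-1)).card + (colF B (c-1)).card := by
      by_cases hne : (colF X (c-1-1)).Nonempty
      · have := star2 hB hd (c-1-1) hne
        have he : c - 1 - 1 + 1 = c - 1 := by ring
        rw [he] at this
        split <;> omega
      · have h0 : (colF X (c-1-1)).card = 0 := by
          rw [Finset.not_nonempty_iff_eq_empty.1 hne]; rfl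
        rw [h0]
        split
        · next h =>
          have := Finset.card_pos.2 (col_nonempty_of_occ (c := c-1) h)
          omega
        · omega
    simp only [← hO] at IH hocc hmain ⊢
    omega

end Core2

end IsoAux
namespace IsoAux

lemma arith (k A s : ℕ) (h : 2*A + s ≤ 4*k+2) : A * s ≤ 2*k*(k+1) := by
  have hcast : 2*(A:ℤ) + s ≤ 4*k+2 := by exact_mod_cast h
  have h2 : (0:ℤ) ≤ ((A:ℤ) - k) * ((A:ℤ) - (k+1)) := by
    rcases le_or_gt (A:ℤ) k with hle | hlt
    · have := mul_nonneg (by linarith : (0:ℤ) ≤ (k:ℤ) - A)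
        (by linarith : (0:ℤ) ≤ (k:ℤ) + 1 - A)
      nlinarith [this]
    · have hk1 : (k:ℤ) + 1 ≤ A := hlt
      exact mul_nonneg (by linarith) (by linarith)
  have hA : (0:ℤ) ≤ (A:ℤ) := Int.natCast_nonneg A
  have hres : (A:ℤ) * s ≤ 2*k*(k+1) := by nlinarith [h2, hcast, hA]
  exact_mod_cast hres

section Core3

variable {X B : Finset (ℤ × ℤ)}
  (hB : ∀ z x : ℤ × ℤ, x ∈ X → latticeZ2.Adj z x → z ∉ X → z ∈ B)
  (hd : ∀ z : ℤ × ℤ, z ∈ B → z ∉ X)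
  (hX : X.Nonempty)

include hB hd hX in
lemma mainU : ∃ A s : ℕ, X.card ≤ s * A ∧ 2*A + s + 1 ≤ B.card := by
  classical
  have hOne : (X.image (fun p => p.1 + p.2)).Nonempty := hX.image _
  obtain ⟨cs, hcsO, hmax⟩ :=
    Finset.exists_max_image (X.image (fun p => p.1 + p.2)) (fun c => (colF X c).card) hOne
  have hcmin : (X.image (fun p => p.1 + p.2)).min' (occ_nonempty hX) ≤ cs :=
    Finset.min'_le _ _ hcsO
  have hcmax : cs ≤ (X.image (fun p => p.1 + p.2)).max' (occ_nonempty hX) :=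
    Finset.le_max' _ _ hcsO
  have hL := invL hB hd hX (cs - 1) (by omega)
  have hR := invR hB hd hX (cs + 1) (by omega)
  rw [show cs - 1 + 1 = cs by ring] at hL
  rw [show cs + 1 - 1 = cs by ring] at hR
  have hdisj : Disjoint (B.filter (fun p => p.1+p.2 ≤ cs - 1))
      (B.filter (fun p => cs + 1 ≤ p.1+p.2)) := by
    simp only [Finset.disjoint_left, Finset.mem_filter]
    rintro p ⟨_, h1⟩ ⟨_, h2⟩
    omega
  have hBsplit : (B.filter (fun p => p.1+p.2 ≤ cs - 1)).card
      + (B.filter (fun p => cs + 1 ≤ p.1+p.2)).card ≤ B.card := by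
    rw [← Finset.card_union_of_disjoint hdisj]
    apply Finset.card_le_card
    intro p hp
    rcases Finset.mem_union.1 hp with h | h <;> exact (Finset.mem_filter.1 h).1
  have hu : X.image (fun p => p.1 + p.2)
      = ((X.image (fun p => p.1 + p.2)).filter (fun e => e ≤ cs - 1))
        ∪ (((X.image (fun p => p.1 + p.2)).filter (fun e => cs + 1 ≤ e)) ∪ {cs}) := by
    ext e
    simp only [Finset.mem_union, Finset.mem_filter, Finset.mem_singleton]
    constructor
    · intro he
      rcases lt_trichotomy e cs with h | h | h
      · exact Or.inl ⟨he, by omega⟩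
      · exact Or.inr (Or.inr h)
      · exact Or.inr (Or.inl ⟨he, by omega⟩)
    · rintro (⟨he, _⟩ | ⟨he, _⟩ | rfl)
      · exact he
      · exact he
      · exact hcsO
  have hd1 : Disjoint ((X.image (fun p => p.1 + p.2)).filter (fun e => cs + 1 ≤ e))
      ({cs} : Finset ℤ) := by
    simp only [Finset.disjoint_left, Finset.mem_filter, Finset.mem_singleton]
    rintro e ⟨_, h1⟩ h2
    omega
  have hd2 : Disjoint ((X.image (fun p => p.1 + p.2)).filter (fun e => e ≤ cs - 1))
      (((X.image (fun p => p.1 + p.2)).filter (fun e => cs + 1 ≤ e)) ∪ {cs}) := by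
    simp only [Finset.disjoint_left, Finset.mem_filter, Finset.mem_union,
      Finset.mem_singleton]
    rintro e ⟨_, h1⟩ (⟨_, h2⟩ | rfl) <;> omega
  have hOsplit := congrArg Finset.card hu
  rw [Finset.card_union_of_disjoint hd2, Finset.card_union_of_disjoint hd1,
    Finset.card_singleton] at hOsplit
  have hfib : X.card = ∑ c ∈ X.image (fun p => p.1 + p.2),
      (X.filter (fun p => p.1 + p.2 = c)).card :=
    Finset.card_eq_sum_card_fiberwise (fun x hx => Finset.mem_image_of_mem _ hx)
  have hsum := Finset.sum_le_card_nsmul (X.image (fun p => p.1 + p.2))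
      (fun c => (X.filter (fun p => p.1 + p.2 = c)).card) ((colF X cs).card)
      (by intro c hc; exact hmax c hc)
  rw [smul_eq_mul] at hsum
  refine ⟨(colF X cs).card, (X.image (fun p => p.1 + p.2)).card, ?_, ?_⟩
  · omega
  · omega

include hB hd in
lemma coreLB (k : ℕ) (hn : X.card = 2*k*(k+1)+1) : 4*k+4 ≤ B.card := by
  have hXne : X.Nonempty := by
    rw [← Finset.card_pos, hn]; omega
  obtain ⟨A, s, h1, h2⟩ := mainU hB hd hXne
  by_contra hcon
  push_neg at hcon
  have hAs : 2*A + s ≤ 4*k+2 := by omega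
  have h3 := arith k A s hAs
  linarith

end Core3

end IsoAux
namespace IsoAux

def ballF (k : ℕ) : Finset (ℤ × ℤ) :=
  ((Finset.Icc (-(k:ℤ)) k) ×ˢ (Finset.Icc (-(k:ℤ)) k)).filter
    (fun p => p.1.natAbs + p.2.natAbs ≤ k)

lemma mem_ballF {k : ℕ} {p : ℤ × ℤ} : p ∈ ballF k ↔ p.1.natAbs + p.2.natAbs ≤ k := by
  simp only [ballF, Finset.mem_filter, Finset.mem_product, Finset.mem_Icc]
  constructor
  · rintro ⟨_, h⟩; exact h
  · intro h; refine ⟨⟨?_, ?_⟩, h⟩ <;> omega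

def sphF (r : ℕ) : Finset (ℤ × ℤ) :=
  ((Finset.Ico (0:ℤ) r).image (fun j => ((r:ℤ) - j, j)))
  ∪ ((Finset.Ico (0:ℤ) r).image (fun j => (-j, (r:ℤ) - j)))
  ∪ ((Finset.Ico (0:ℤ) r).image (fun j => (j - r, -j)))
  ∪ ((Finset.Ico (0:ℤ) r).image (fun j => (j, j - (r:ℤ))))

lemma mem_sphF {r : ℕ} (hr : 1 ≤ r) {p : ℤ × ℤ} :
    p ∈ sphF r ↔ p.1.natAbs + p.2.natAbs = r := by
  obtain ⟨a, b⟩ := p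
  simp only [sphF, Finset.mem_union, Finset.mem_image, Finset.mem_Ico, Prod.ext_iff]
  constructor
  · rintro (((⟨j, hj, h1, h2⟩ | ⟨j, hj, h1, h2⟩) | ⟨j, hj, h1, h2⟩) | ⟨j, hj, h1, h2⟩) <;> omega
  · intro h
    by_cases h1 : 1 ≤ a ∧ 0 ≤ b
    · exact Or.inl (Or.inl (Or.inl ⟨b, by omega, by omega, by omega⟩))
    · by_cases h2 : a ≤ 0 ∧ 1 ≤ b
      · exact Or.inl (Or.inl (Or.inr ⟨-a, by omega, by omega, by omega⟩))
      · by_cases h3 : a ≤ -1 ∧ b ≤ 0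
        · exact Or.inl (Or.inr ⟨-b, by omega, by omega, by omega⟩)
        · exact Or.inr ⟨a, by omega, by omega, by omega⟩

lemma card_sphF {r : ℕ} (hr : 1 ≤ r) : (sphF r).card = 4 * r := by
  have hIco : (Finset.Ico (0:ℤ) r).card = r := by
    rw [Int.card_Ico]
    omega
  have c1 : ((Finset.Ico (0:ℤ) r).image (fun j => ((r:ℤ) - j, j))).card = r := by
    rw [Finset.card_image_of_injective _ (fun x y h => by
      simp only [Prod.ext_iff] at h; omega), hIco]
  have c2 : ((Finset.Ico (0:ℤ) r).image (fun j => (-j, (r:ℤ) - j))).card = r := by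
    rw [Finset.card_image_of_injective _ (fun x y h => by
      simp only [Prod.ext_iff] at h; omega), hIco]
  have c3 : ((Finset.Ico (0:ℤ) r).image (fun j => (j - (r:ℤ), -j))).card = r := by
    rw [Finset.card_image_of_injective _ (fun x y h => by
      simp only [Prod.ext_iff] at h; omega), hIco]
  have c4 : ((Finset.Ico (0:ℤ) r).image (fun j => (j, j - (r:ℤ)))).card = r := by
    rw [Finset.card_image_of_injective _ (fun x y h => by
      simp only [Prod.ext_iff] at h; omega), hIco]
  have sign1 : ∀ p ∈ (Finset.Ico (0:ℤ) r).image (fun j => ((r:ℤ) - j, j)),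
      1 ≤ p.1 ∧ 0 ≤ p.2 := by
    rintro p hp
    obtain ⟨j, hj, rfl⟩ := Finset.mem_image.1 hp
    simp only [Finset.mem_Ico] at hj
    constructor <;> simp <;> omega
  have sign2 : ∀ p ∈ (Finset.Ico (0:ℤ) r).image (fun j => (-j, (r:ℤ) - j)),
      p.1 ≤ 0 ∧ 1 ≤ p.2 := by
    rintro p hp
    obtain ⟨j, hj, rfl⟩ := Finset.mem_image.1 hp
    simp only [Finset.mem_Ico] at hj
    constructor <;> simp <;> omega
  have sign3 : ∀ p ∈ (Finset.Ico (0:ℤ) r).image (fun j => (j - (r:ℤ), -j)),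
      p.1 ≤ -1 ∧ p.2 ≤ 0 := by
    rintro p hp
    obtain ⟨j, hj, rfl⟩ := Finset.mem_image.1 hp
    simp only [Finset.mem_Ico] at hj
    constructor <;> simp <;> omega
  have sign4 : ∀ p ∈ (Finset.Ico (0:ℤ) r).image (fun j => (j, j - (r:ℤ))),
      0 ≤ p.1 ∧ p.2 ≤ -1 := by
    rintro p hp
    obtain ⟨j, hj, rfl⟩ := Finset.mem_image.1 hp
    simp only [Finset.mem_Ico] at hj
    constructor <;> simp <;> omega
  rw [sphF, Finset.card_union_of_disjoint, Finset.card_union_of_disjoint,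
    Finset.card_union_of_disjoint, c1, c2, c3, c4]
  · omega
  · rw [Finset.disjoint_left]
    intro p hp1 hp2
    have := sign1 p hp1
    have := sign2 p hp2
    omega
  · rw [Finset.disjoint_left]
    intro p hp1 hp2
    have := sign3 p hp2
    rcases Finset.mem_union.1 hp1 with h | h
    · have := sign1 p h; omega
    · have := sign2 p h; omega
  · rw [Finset.disjoint_left]
    intro p hp1 hp2
    have := sign4 p hp2
    rcases Finset.mem_union.1 hp1 with h | h
    · rcases Finset.mem_union.1 h with h' | h'
      · have := sign1 p h'; omega
      · have := sign2 p h'; omega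
    · have := sign3 p h; omega

lemma card_ballF (k : ℕ) : (ballF k).card = 2*k*(k+1) + 1 := by
  induction k with
  | zero =>
    have : ballF 0 = {((0:ℤ), (0:ℤ))} := by
      ext p
      rw [mem_ballF]
      simp only [Finset.mem_singleton, Prod.ext_iff]
      omega
    rw [this]
    simp
  | succ k ih =>
    have hsplit : ballF (k+1) = ballF k ∪ sphF (k+1) := by
      ext p
      rw [mem_ballF, Finset.mem_union, mem_ballF, mem_sphF (by omega)]
      omega
    have hdisj : Disjoint (ballF k) (sphF (k+1)) := by
      rw [Finset.disjoint_left]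
      intro p hp1 hp2
      rw [mem_ballF] at hp1
      rw [mem_sphF (by omega)] at hp2
      omega
    rw [hsplit, Finset.card_union_of_disjoint hdisj, ih, card_sphF (by omega)]
    ring

lemma bdF_ballF (k : ℕ) : bdF (ballF k) = sphF (k+1) := by
  ext z
  rw [mem_bdF, mem_sphF (by omega)]
  constructor
  · rintro ⟨hz, x, hx, hadj⟩
    rw [mem_ballF] at hz hx
    rw [adj_iff'] at hadj
    omega
  · intro hz
    have hz' : z ∉ ballF k := by rw [mem_ballF]; omega
    refine ⟨hz', ?_⟩
    obtain ⟨a, b⟩ := z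
    simp only at hz
    by_cases h1 : 1 ≤ a
    · exact ⟨(a - 1, b), mem_ballF.2 (by simp; omega), adj_iff'.2 (by simp)⟩
    · by_cases h2 : a ≤ -1
      · exact ⟨(a + 1, b), mem_ballF.2 (by simp; omega), adj_iff'.2 (by simp)⟩
      · by_cases h3 : 1 ≤ b
        · exact ⟨(a, b - 1), mem_ballF.2 (by simp; omega), adj_iff'.2 (by simp)⟩
        · exact ⟨(a, b + 1), mem_ballF.2 (by simp; omega), adj_iff'.2 (by simp)⟩

end IsoAux
namespace IsoAux

lemma mono_step (Y : Finset (ℤ×ℤ)) (hY : Y.Nonempty) :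
    ∃ Y' : Finset (ℤ×ℤ), Y'.card = Y.card - 1 ∧ (bdF Y').card ≤ (bdF Y).card := by
  classical
  have hOne : (Y.image (fun p => p.1 + p.2)).Nonempty := hY.image _
  set c1 := (Y.image (fun p => p.1 + p.2)).max' hOne with hc1
  have hcol : (colF Y c1).Nonempty := col_nonempty_of_occ (Finset.max'_mem _ _)
  obtain ⟨p, hpcol, hpmax⟩ := Finset.exists_max_image (colF Y c1) (fun q => q.1) hcol
  obtain ⟨hpY, hpc⟩ := mem_colF.1 hpcol
  have hu : ∀ q ∈ Y, q.1 + q.2 ≤ c1 := fun q hq => by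
    exact Finset.le_max' _ _ (Finset.mem_image_of_mem (fun p => p.1 + p.2) hq)
  set z : ℤ × ℤ := (p.1 + 1, p.2) with hz
  have hzY : z ∉ Y := by
    intro hmem
    have := hu z hmem
    simp only [hz] at this
    omega
  have hadjzp : latticeZ2.Adj z p := by
    rw [adj_iff']
    simp [hz]
  have hzB : z ∈ bdF Y := mem_bdF.2 ⟨hzY, p, hpY, hadjzp⟩
  have huniq : ∀ x ∈ Y, latticeZ2.Adj z x → x = p := by
    intro x hx hadj
    have hxc := hu x hx
    have hcases : (x.1 = z.1 + 1 ∧ x.2 = z.2) ∨ (x.1 = z.1 - 1 ∧ x.2 = z.2)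
        ∨ (x.1 = z.1 ∧ x.2 = z.2 + 1) ∨ (x.1 = z.1 ∧ x.2 = z.2 - 1) := by
      have := adj_iff'.1 hadj
      omega
    have hz1 : z.1 = p.1 + 1 := rfl
    have hz2 : z.2 = p.2 := rfl
    rcases hcases with ⟨h1, h2⟩ | ⟨h1, h2⟩ | ⟨h1, h2⟩ | ⟨h1, h2⟩
    · exfalso; omega
    · exact Prod.ext (by omega) (by omega)
    · exfalso; omega
    · exfalso
      have hxcol : x ∈ colF Y c1 := mem_colF.2 ⟨hx, by omega⟩
      have := hpmax x hxcol
      omega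
  refine ⟨Y.erase p, Finset.card_erase_of_mem hpY, ?_⟩
  have hsub : bdF (Y.erase p) ⊆ insert p ((bdF Y).erase z) := by
    intro w hw
    obtain ⟨hwY', x, hx', hadj⟩ := mem_bdF.1 hw
    by_cases hwp : w = p
    · exact Finset.mem_insert.2 (Or.inl hwp)
    · have hxY : x ∈ Y := Finset.mem_of_mem_erase hx'
      have hwY : w ∉ Y := by
        intro hmem
        exact hwY' (Finset.mem_erase.2 ⟨hwp, hmem⟩)
      have hwB : w ∈ bdF Y := mem_bdF.2 ⟨hwY, x, hxY, hadj⟩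
      have hwz : w ≠ z := by
        intro rfl_eq
        subst rfl_eq
        have := huniq x hxY hadj
        exact (Finset.mem_erase.1 hx').1 this
      exact Finset.mem_insert.2 (Or.inr (Finset.mem_erase.2 ⟨hwz, hwB⟩))
  have hcard1 : (bdF (Y.erase p)).card ≤ ((bdF Y).erase z).card + 1 :=
    le_trans (Finset.card_le_card hsub) (Finset.card_insert_le _ _)
  have hcard2 : ((bdF Y).erase z).card = (bdF Y).card - 1 :=
    Finset.card_erase_of_mem hzB
  have hpos : 1 ≤ (bdF Y).card := Finset.card_pos.2 ⟨z, hzB⟩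
  omega

lemma iso_nonempty (n : ℕ) :
    {m : ℕ | ∃ Y : Finset (ℤ×ℤ), Y.card = n ∧ (bdF Y).card = m}.Nonempty := by
  refine ⟨(bdF ((Finset.range n).image (fun i : ℕ => ((i:ℤ), (0:ℤ))))).card,
    (Finset.range n).image (fun i : ℕ => ((i:ℤ), (0:ℤ))), ?_, rfl⟩
  have hinj : Function.Injective (fun i : ℕ => ((i:ℤ), (0:ℤ))) := by
    intro i j h
    simp only [Prod.ext_iff] at h
    exact_mod_cast h.1
  rw [Finset.card_image_of_injective _ hinj, Finset.card_range]

end IsoAux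

/-- **Lemma (isoperimetric numbers of the lattice graph `(ℤ², ℓ¹)`).**
`∂_V^{n+1} ≥ ∂_V^n` for all `n ≥ 1`, and `∂_V^n = 4k + 4` when `n = 2k(k+1) + 1`. -/
theorem latticeZ2_isoNum :
    (∀ n : ℕ, 1 ≤ n → isoNum latticeZ2 n ≤ isoNum latticeZ2 (n + 1))
    ∧ (∀ k : ℕ, isoNum latticeZ2 (2 * k * (k + 1) + 1) = 4 * k + 4) := by
  constructor
  · intro n hn
    rw [IsoAux.iso_eq, IsoAux.iso_eq]
    obtain ⟨Y, hYcard, hYbd⟩ := Nat.sInf_mem (IsoAux.iso_nonempty (n+1))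
    obtain ⟨Y', h1, h2⟩ := IsoAux.mono_step Y (by rw [← Finset.card_pos, hYcard]; omega)
    refine le_trans (Nat.sInf_le ⟨Y', by omega, rfl⟩) (by omega)
  · intro k
    rw [IsoAux.iso_eq]
    apply le_antisymm
    · apply Nat.sInf_le
      refine ⟨IsoAux.ballF k, IsoAux.card_ballF k, ?_⟩
      rw [IsoAux.bdF_ballF, IsoAux.card_sphF (by omega)]
      omega
    · obtain ⟨Y, hYcard, hYbd⟩ := Nat.sInf_mem (IsoAux.iso_nonempty (2*k*(k+1)+1))
      rw [← hYbd]
      exact IsoAux.coreLB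
        (fun z x hx hadj hz => IsoAux.mem_bdF.2 ⟨hz, x, hx, hadj⟩)
        (fun z hz => (IsoAux.mem_bdF.1 hz).1) k hYcard
end
end

section
/- Let η be the spiral labelling of ℤ² and suppose m < n are positive integers such that η(m) and η(n) are adjacent in the lattice graph (ℤ², ℓ¹). Then n ≤ m + 7·√m. -/
open scoped ENNReal Classical

noncomputable section

/-- Explicit spiral label (1-indexed) of a lattice point. -/
def lab (p : ℤ × ℤ) : ℤ :=
  if p.2 ≤ p.1 ∧ -p.2 < p.1 then 4*p.1^2 - 3*p.1 + 1 + p.2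
  else if p.1 < p.2 ∧ -p.1 ≤ p.2 then 4*p.2^2 - p.2 + 1 - p.1
  else if p.1 ≤ p.2 ∧ p.2 < -p.1 then 4*p.1^2 - p.1 + 1 - p.2
  else if p.2 < p.1 ∧ p.1 ≤ -p.2 then 4*p.2^2 - 3*p.2 + 1 + p.1
  else 1

set_option maxHeartbeats 2000000 in
lemma lab_next (x y : ℤ) : lab (spiralNext (x, y)) = lab (x, y) + 1 := by
  simp only [spiralNext, abs_le, abs_lt]
  split_ifs with h1 h2 h3 h4 <;>
  · simp only [lab]
    split_ifs <;>
      first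
        | (exfalso; omega)
        | ring1
        | (have h : x = y := (by omega); subst h; ring1)
        | (have h : x = -y := (by omega); subst h; ring1)
        | (have h : y = -x := (by omega); subst h; ring1)

lemma lab_spiral (k : ℕ) : lab (spiral k) = (k : ℤ) + 1 := by
  induction k with
  | zero => simp [spiral, lab]
  | succ j ih =>
    have hs : spiral (j + 1) = spiralNext (spiral j) := by
      simp [spiral, Function.iterate_succ_apply']
    have hn := lab_next (spiral j).1 (spiral j).2
    rw [hs]
    push_cast
    rw [show ((spiral j).1, (spiral j).2) = spiral j from rfl] at hn
    rw [hn, ih]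
    try ring

set_option maxHeartbeats 4000000 in
lemma lab_gap (x y a b : ℤ) (hadj : |x - a| + |y - b| = 1)
    (hlt : lab (x, y) < lab (a, b)) :
    (lab (a, b) - lab (x, y)) ^ 2 ≤ 49 * lab (x, y) := by
  have hc : (a = x + 1 ∧ b = y) ∨ (a = x - 1 ∧ b = y) ∨ (a = x ∧ b = y + 1) ∨
      (a = x ∧ b = y - 1) := by
    rcases abs_cases (x - a) with ⟨e1, _⟩ | ⟨e1, _⟩ <;>
      rcases abs_cases (y - b) with ⟨e2, _⟩ | ⟨e2, _⟩ <;> omega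
  rcases hc with ⟨ha, hb⟩ | ⟨ha, hb⟩ | ⟨ha, hb⟩ | ⟨ha, hb⟩ <;>
  · rw [ha, hb] at hlt ⊢
    simp only [lab] at hlt ⊢
    split_ifs at hlt ⊢ <;>
      first
        | (exfalso; omega)
        | (exfalso; linarith)
        | (have hx : x = 0 ∧ y = 0 := (by omega); rw [hx.1, hx.2]; norm_num)
        | nlinarith [sq_nonneg (2*x+1), sq_nonneg (2*x-1), sq_nonneg (2*y+1), sq_nonneg (2*y-1),
            sq_nonneg x, sq_nonneg y, sq_nonneg (x+y), sq_nonneg (x-y)]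
        | (have h : x = y := (by omega); rw [h];
            nlinarith [sq_nonneg (2*y+1), sq_nonneg (2*y-1), sq_nonneg y])
        | (have h : x = -y := (by omega); rw [h];
            nlinarith [sq_nonneg (2*y+1), sq_nonneg (2*y-1), sq_nonneg y])
        | (have h : x = -y + 1 := (by omega); rw [h];
            nlinarith [sq_nonneg (2*y+1), sq_nonneg (2*y-1), sq_nonneg y])


/-- **Lemma (spiral labels of adjacent vertices).**  If `m < n` are positive integers
whose spiral-labelled vertices `η(m) = spiral (m-1)` and `η(n) = spiral (n-1)` are
adjacent in the lattice graph `(ℤ², ℓ¹)`, then `n ≤ m + 7√m`. -/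

theorem spiral_adjacent_label_gap (m n : ℕ) (hm : 1 ≤ m) (hmn : m < n)
    (hadj : latticeZ2.Adj (spiral (m - 1)) (spiral (n - 1))) :
    (n : ℝ) ≤ (m : ℝ) + 7 * Real.sqrt m := by
  set p := spiral (m - 1) with hp
  set q := spiral (n - 1) with hq
  have hlabp : lab p = (m : ℤ) := by
    rw [hp, lab_spiral]; omega
  have hlabq : lab q = (n : ℤ) := by
    rw [hq, lab_spiral]; omega
  have hadj' : |p.1 - q.1| + |p.2 - q.2| = 1 := hadj
  have hlt : lab (p.1, p.2) < lab (q.1, q.2) := by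
    rw [show (p.1, p.2) = p from rfl, show (q.1, q.2) = q from rfl, hlabp, hlabq]
    exact_mod_cast hmn
  have hgap := lab_gap p.1 p.2 q.1 q.2 hadj' hlt
  rw [show (p.1, p.2) = p from rfl, show (q.1, q.2) = q from rfl, hlabp, hlabq] at hgap
  have hgapR : ((n : ℝ) - (m : ℝ)) ^ 2 ≤ 49 * (m : ℝ) := by exact_mod_cast hgap
  have h0 : (0 : ℝ) ≤ (n : ℝ) - (m : ℝ) := by
    have : (m : ℝ) ≤ (n : ℝ) := by exact_mod_cast hmn.le
    linarith
  have h2 : (n : ℝ) - (m : ℝ) ≤ Real.sqrt (49 * m) := by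
    rw [← Real.sqrt_sq h0]
    exact Real.sqrt_le_sqrt hgapR
  have h3 : Real.sqrt (49 * m) = 7 * Real.sqrt m := by
    rw [show (49 : ℝ) * m = 7 ^ 2 * m by ring, Real.sqrt_mul (by positivity),
      Real.sqrt_sq (by norm_num)]
  linarith [h2, h3.le, h3.ge]
end
end

section
/- Let G_c be the universal comparison graph of the lattice graph (ℤ², ℓ¹) and identify the vertices of ℤ² with ℕ_{≥1} via the spiral labelling. For every edge e of G_c, there are at most 16 edges (i, j) of the lattice graph (with spiral labels i < j) such that e lies on the path Ψ(i,j). -/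
open scoped ENNReal Classical

noncomputable section

/-- The universal comparison graph of the lattice graph `(ℤ², ℓ¹)`. -/
def GcZ2 : SimpleGraph ℕ+ := comparisonGraph latticeZ2

/-- `i` lies on the path from `1` to `k` in the tree `G_c`. -/
def liesOnPathFromOne (i k : ℕ+) : Prop :=
  GcZ2.dist 1 i + GcZ2.dist i k = GcZ2.dist 1 k

/-- The edge `{a, b}` of `G_c` lies on the (unique shortest) path in the tree `G_c`
from `i` to `k`. -/
def edgeOnPath (i k a b : ℕ+) : Prop :=
  GcZ2.Adj a b ∧
    (GcZ2.dist i a + 1 + GcZ2.dist b k = GcZ2.dist i k ∨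
     GcZ2.dist i b + 1 + GcZ2.dist a k = GcZ2.dist i k)

namespace PsiAux

lemma lat_adj (p q : ℤ × ℤ) : latticeZ2.Adj p q ↔ |p.1 - q.1| + |p.2 - q.2| = 1 := Iff.rfl

lemma boundary_subset (X : Set (ℤ × ℤ)) :
    vertexBoundary latticeZ2 X ⊆ ⋃ x ∈ X, {(x.1+1,x.2),(x.1-1,x.2),(x.1,x.2+1),(x.1,x.2-1)} := by
  rintro z ⟨hz, x, hx, hadj⟩
  rw [lat_adj] at hadj
  refine Set.mem_biUnion hx ?_
  have h1 : (z.1 - x.1 = 1 ∧ z.2 = x.2) ∨ (z.1 - x.1 = -1 ∧ z.2 = x.2)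
      ∨ (z.2 - x.2 = 1 ∧ z.1 = x.1) ∨ (z.2 - x.2 = -1 ∧ z.1 = x.1) := by
    rcases abs_cases (z.1 - x.1) with ⟨e1, _⟩ | ⟨e1, _⟩ <;>
      rcases abs_cases (z.2 - x.2) with ⟨e2, _⟩ | ⟨e2, _⟩ <;> omega
  simp only [Set.mem_insert_iff, Set.mem_singleton_iff]
  rcases h1 with ⟨h, h'⟩ | ⟨h, h'⟩ | ⟨h, h'⟩ | ⟨h, h'⟩
  · exact Or.inl (Prod.ext (by omega) h')
  · exact Or.inr (Or.inl (Prod.ext (by omega) h'))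
  · exact Or.inr (Or.inr (Or.inl (Prod.ext h' (by omega))))
  · exact Or.inr (Or.inr (Or.inr (Prod.ext h' (by omega))))

lemma boundary_finite {X : Set (ℤ × ℤ)} (hX : X.Finite) :
    (vertexBoundary latticeZ2 X).Finite := by
  refine Set.Finite.subset ?_ (boundary_subset X)
  exact hX.biUnion (fun x _ => (Set.finite_singleton _).insert _ |>.insert _ |>.insert _)

def isoSet (n : ℕ) : Set ℕ :=
  {m : ℕ | ∃ X : Set (ℤ × ℤ), X.Finite ∧ X.ncard = n ∧
    (vertexBoundary latticeZ2 X).Finite ∧ (vertexBoundary latticeZ2 X).ncard = m}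

lemma isoSet_nonempty (n : ℕ) : (isoSet n).Nonempty := by
  classical
  set X : Set (ℤ × ℤ) := (fun t : ℕ => ((t : ℤ), (0:ℤ))) '' (Set.Iio n) with hXdef
  have hfin : X.Finite := (Set.finite_Iio n).image _
  have hinj : Set.InjOn (fun t : ℕ => ((t : ℤ), (0:ℤ))) (Set.Iio n) := by
    intro s _ t _ h
    simpa using congrArg Prod.fst h
  have hcard : X.ncard = n := by
    rw [hXdef, Set.ncard_image_of_injOn hinj]
    rw [Set.ncard_eq_toFinset_card', Set.toFinset_Iio, Nat.card_Iio]
  exact ⟨_, X, hfin, hcard, boundary_finite hfin, rfl⟩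

lemma isoNum_mem (n : ℕ) : isoNum latticeZ2 n ∈ isoSet n :=
  Nat.sInf_mem (isoSet_nonempty n)

lemma isoNum_le {n m : ℕ} (h : m ∈ isoSet n) : isoNum latticeZ2 n ≤ m :=
  Nat.sInf_le h

end PsiAux
namespace PsiAux

open Finset in
lemma two_cols_le {X : Set (ℤ × ℤ)} (hX : X.Finite) (hB : (vertexBoundary latticeZ2 X).Finite) :
    2 * (hX.toFinset.image Prod.fst).card ≤ hB.toFinset.card := by
  classical
  set F := hX.toFinset with hF
  set B := hB.toFinset with hBf
  set C := F.image Prod.fst with hC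
  set Y : ℤ → Finset ℤ := fun c => (F.filter (fun p => p.1 = c)).image Prod.snd with hY
  have hYne : ∀ c ∈ C, (Y c).Nonempty := by
    intro c hc
    rcases Finset.mem_image.1 hc with ⟨p, hp, rfl⟩
    exact ⟨p.2, Finset.mem_image.2 ⟨p, Finset.mem_filter.2 ⟨hp, rfl⟩, rfl⟩⟩
  set M : ℤ → ℤ := fun c => WithBot.unbotD 0 (Y c).max with hM
  set m : ℤ → ℤ := fun c => WithTop.untopD 0 (Y c).min with hm
  have hMeq : ∀ c (h : (Y c).Nonempty), M c = (Y c).max' h := by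
    intro c h; rw [hM]; simp only [← Finset.coe_max' h]; rfl
  have hmeq : ∀ c (h : (Y c).Nonempty), m c = (Y c).min' h := by
    intro c h; rw [hm]; simp only [← Finset.coe_min' h]; rfl
  have hmemY : ∀ c y, y ∈ Y c ↔ (c, y) ∈ X := by
    intro c y
    constructor
    · intro hy
      rcases Finset.mem_image.1 hy with ⟨p, hp, rfl⟩
      rcases Finset.mem_filter.1 hp with ⟨hp1, hp2⟩
      have : p = (c, p.2) := Prod.ext hp2 rfl
      rw [← this]; exact hX.mem_toFinset.1 hp1
    · intro hy
      exact Finset.mem_image.2 ⟨(c, y), Finset.mem_filter.2 ⟨hX.mem_toFinset.2 hy, rfl⟩, rfl⟩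
  have hMmem : ∀ c ∈ C, (c, M c) ∈ X := by
    intro c hc
    have h := hYne c hc
    rw [hMeq c h, ← hmemY]; exact Finset.max'_mem _ h
  have hmmem : ∀ c ∈ C, (c, m c) ∈ X := by
    intro c hc
    have h := hYne c hc
    rw [hmeq c h, ← hmemY]; exact Finset.min'_mem _ h
  have hMle : ∀ c ∈ C, ∀ y, (c, y) ∈ X → y ≤ M c := by
    intro c hc y hy
    have h := hYne c hc
    rw [hMeq c h]; exact Finset.le_max' _ _ ((hmemY c y).2 hy)
  have hmle : ∀ c ∈ C, ∀ y, (c, y) ∈ X → m c ≤ y := by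
    intro c hc y hy
    have h := hYne c hc
    rw [hmeq c h]; exact Finset.min'_le _ _ ((hmemY c y).2 hy)
  set f : ℤ × Bool → ℤ × ℤ := fun q => if q.2 then (q.1, M q.1 + 1) else (q.1, m q.1 - 1) with hf
  have hmaps : ∀ q ∈ C ×ˢ ({true, false} : Finset Bool), f q ∈ B := by
    rintro ⟨c, b⟩ hq
    have hc : c ∈ C := (Finset.mem_product.1 hq).1
    rw [hBf, hB.mem_toFinset]
    cases b
    · have hfe : f (c, false) = (c, m c - 1) := by simp [hf]
      rw [hfe]
      refine ⟨fun hmem => ?_, (c, m c), hmmem c hc, ?_⟩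
      · have := hmle c hc _ hmem; omega
      · rw [lat_adj]; simp
    · have hfe : f (c, true) = (c, M c + 1) := by simp [hf]
      rw [hfe]
      refine ⟨fun hmem => ?_, (c, M c), hMmem c hc, ?_⟩
      · have := hMle c hc _ hmem; omega
      · rw [lat_adj]; simp
  have hinj : Set.InjOn f ↑(C ×ˢ ({true, false} : Finset Bool)) := by
    rintro ⟨c1, b1⟩ h1 ⟨c2, b2⟩ h2 heq
    simp only [Finset.coe_product, Set.mem_prod, Finset.mem_coe, Finset.mem_product] at h1 h2
    have hc1 : c1 ∈ C := h1.1
    have hc2 : c2 ∈ C := h2.1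
    have hcc : c1 = c2 := by
      have := congrArg Prod.fst heq
      cases b1 <;> cases b2 <;> simpa [hf] using this
    subst hcc
    have hmM : m c1 ≤ M c1 := by
      have h1' := hMle c1 hc1 _ (hmmem c1 hc1)
      exact h1'
    have := congrArg Prod.snd heq
    cases b1 <;> cases b2 <;> simp [hf] at this ⊢ <;> omega
  have hcard := Finset.card_le_card_of_injOn f hmaps hinj
  rwa [Finset.card_product, Finset.card_insert_of_notMem (by simp), Finset.card_singleton,
    Nat.mul_comm] at hcard

end PsiAux
namespace PsiAux

lemma swap_mem_bd {X : Set (ℤ × ℤ)} {z : ℤ × ℤ} (h : z ∈ vertexBoundary latticeZ2 X) :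
    z.swap ∈ vertexBoundary latticeZ2 (Prod.swap '' X) := by
  obtain ⟨hz, x, hx, hadj⟩ := h
  refine ⟨fun hmem => ?_, x.swap, ⟨x, hx, rfl⟩, ?_⟩
  · rcases hmem with ⟨w, hw, hweq⟩
    have : w = z := by
      have := congrArg Prod.swap hweq; simpa using this
    exact hz (this ▸ hw)
  · rw [lat_adj] at hadj ⊢
    simp only [Prod.swap, Prod.fst, Prod.snd] at *
    omega

lemma bd_swap (X : Set (ℤ × ℤ)) :
    vertexBoundary latticeZ2 (Prod.swap '' X) = Prod.swap '' vertexBoundary latticeZ2 X := by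
  ext z
  constructor
  · intro h
    have h2 := swap_mem_bd (X := Prod.swap '' X) h
    rw [Set.image_image] at h2
    simp only [Prod.swap_swap, Set.image_id'] at h2
    exact ⟨z.swap, h2, Prod.swap_swap z⟩
  · rintro ⟨w, hw, rfl⟩
    exact swap_mem_bd hw

lemma ncard_coe {X : Set (ℤ × ℤ)} (hX : X.Finite) : X.ncard = hX.toFinset.card := by
  have := Set.ncard_coe_finset hX.toFinset
  rwa [hX.coe_toFinset] at this

lemma two_cols_le' {X : Set (ℤ × ℤ)} (hX : X.Finite) (hB : (vertexBoundary latticeZ2 X).Finite) :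
    2 * (Prod.fst '' X).ncard ≤ (vertexBoundary latticeZ2 X).ncard := by
  have hcoe : ((hX.toFinset.image Prod.fst : Finset ℤ) : Set ℤ) = Prod.fst '' X := by
    rw [Finset.coe_image, Set.Finite.coe_toFinset]
  have h1 : (Prod.fst '' X).ncard = (hX.toFinset.image Prod.fst).card := by
    rw [← hcoe, Set.ncard_coe_finset]
  rw [h1, ncard_coe hB]
  exact two_cols_le hX hB

lemma two_rows_le' {X : Set (ℤ × ℤ)} (hX : X.Finite) (hB : (vertexBoundary latticeZ2 X).Finite) :
    2 * (Prod.snd '' X).ncard ≤ (vertexBoundary latticeZ2 X).ncard := by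
  have hX' : (Prod.swap '' X).Finite := hX.image _
  have hB' : (vertexBoundary latticeZ2 (Prod.swap '' X)).Finite := by
    rw [bd_swap]; exact hB.image _
  have h := two_cols_le' hX' hB'
  have h1 : Prod.fst '' (Prod.swap '' X) = Prod.snd '' X := by
    rw [Set.image_image]; rfl
  have h2 : (vertexBoundary latticeZ2 (Prod.swap '' X)).ncard
      = (vertexBoundary latticeZ2 X).ncard := by
    rw [bd_swap, Set.ncard_image_of_injective _ Prod.swap_injective]
  rwa [h1, h2] at h

lemma iso_sq (n : ℕ) : 4 * n ≤ (isoNum latticeZ2 n) ^ 2 := by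
  obtain ⟨X, hX, hXcard, hBfin, hBcard⟩ := isoNum_mem n
  set mm := isoNum latticeZ2 n with hmm
  have hC := two_cols_le' hX hBfin
  have hR := two_rows_le' hX hBfin
  rw [hBcard] at hC hR
  have hsub : X ⊆ (Prod.fst '' X) ×ˢ (Prod.snd '' X) := by
    rintro ⟨px, py⟩ hp
    exact ⟨⟨(px, py), hp, rfl⟩, ⟨(px, py), hp, rfl⟩⟩
  have e1 : (Prod.fst '' X).ncard = (hX.toFinset.image Prod.fst).card := by
    rw [← Set.ncard_coe_finset (hX.toFinset.image Prod.fst), Finset.coe_image,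
      Set.Finite.coe_toFinset]
  have e2 : (Prod.snd '' X).ncard = (hX.toFinset.image Prod.snd).card := by
    rw [← Set.ncard_coe_finset (hX.toFinset.image Prod.snd), Finset.coe_image,
      Set.Finite.coe_toFinset]
  have hn : n ≤ (Prod.fst '' X).ncard * (Prod.snd '' X).ncard := by
    rw [e1, e2, ← Finset.card_product, ← hXcard, ncard_coe hX]
    refine Finset.card_le_card ?_
    intro p hp
    exact Finset.mem_product.2 ⟨Finset.mem_image_of_mem _ hp, Finset.mem_image_of_mem _ hp⟩
  calc 4 * n ≤ 4 * ((Prod.fst '' X).ncard * (Prod.snd '' X).ncard) := by omega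
    _ = (2 * (Prod.fst '' X).ncard) * (2 * (Prod.snd '' X).ncard) := by ring
    _ ≤ mm * mm := Nat.mul_le_mul hC hR
    _ = mm ^ 2 := (sq mm).symm

lemma iso_ge_two {n : ℕ} (hn : 1 ≤ n) : 2 ≤ isoNum latticeZ2 n := by
  have h := iso_sq n
  by_contra hlt
  interval_cases h2 : (isoNum latticeZ2 n) <;> simp_all <;> omega

lemma iso_succ (m : ℕ) : isoNum latticeZ2 m ≤ isoNum latticeZ2 (m + 1) + 1 := by
  obtain ⟨X, hX, hXcard, hBfin, hBcard⟩ := isoNum_mem (m + 1)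
  have hne : X.Nonempty := by
    rw [Set.nonempty_iff_ne_empty]
    intro h; rw [h] at hXcard; simp at hXcard
  obtain ⟨x, hx⟩ := hne
  set X' := X \ {x} with hX'
  have hX'fin : X'.Finite := hX.diff
  have hX'card : X'.ncard = m := by
    rw [hX', Set.ncard_diff_singleton_of_mem hx, hXcard]
    omega
  have hbd : vertexBoundary latticeZ2 X' ⊆ vertexBoundary latticeZ2 X ∪ {x} := by
    rintro z ⟨hz, w, hw, hadj⟩
    by_cases hzx : z = x
    · exact Or.inr (by simp [hzx])
    · refine Or.inl ⟨fun hmem => hz ⟨hmem, by simp [hzx]⟩, w, hw.1, hadj⟩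
  have hfin2 : (vertexBoundary latticeZ2 X ∪ {x}).Finite := hBfin.union (Set.finite_singleton _)
  have h1 : isoNum latticeZ2 m ≤ (vertexBoundary latticeZ2 X').ncard :=
    isoNum_le ⟨X', hX'fin, hX'card, hfin2.subset hbd, rfl⟩
  calc isoNum latticeZ2 m ≤ (vertexBoundary latticeZ2 X').ncard := h1
    _ ≤ (vertexBoundary latticeZ2 X ∪ {x}).ncard := Set.ncard_le_ncard hbd hfin2
    _ ≤ (vertexBoundary latticeZ2 X).ncard + ({x} : Set (ℤ×ℤ)).ncard := Set.ncard_union_le _ _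
    _ = isoNum latticeZ2 (m+1) + 1 := by rw [hBcard, Set.ncard_singleton]

end PsiAux
namespace PsiAux

/-- Closed-form spiral index. -/
def idxZ (p : ℤ × ℤ) : ℤ :=
  if 0 < p.1 ∧ -p.1 < p.2 ∧ p.2 ≤ p.1 then (2*p.1-1)^2 + (p.2 + p.1 - 1)
  else if 0 < p.2 ∧ -p.2 ≤ p.1 ∧ p.1 < p.2 then (2*p.2-1)^2 + (3*p.2 - 1 - p.1)
  else if p.1 < 0 ∧ p.1 < p.2 ∧ p.2 < -p.1 then (2*p.1+1)^2 + (-5*p.1 - 1 - p.2)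
  else if p.2 < 0 ∧ p.2 ≤ p.1 ∧ p.1 ≤ -p.2 then (2*p.2+1)^2 + (-7*p.2 - 1 + p.1)
  else 0

lemma idx_origin : idxZ (0, 0) = 0 := by norm_num [idxZ]

lemma idx_br1 {x y : ℤ} (h1 : 0 < x) (h2 : -x < y) (h3 : y ≤ x) :
    idxZ (x, y) = (2*x-1)^2 + (y + x - 1) := by
  rw [idxZ, if_pos ⟨h1, h2, h3⟩]

lemma idx_br2 {x y : ℤ} (h1 : 0 < y) (h2 : -y ≤ x) (h3 : x < y) :
    idxZ (x, y) = (2*y-1)^2 + (3*y - 1 - x) := by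
  rw [idxZ, if_neg (by dsimp only; omega), if_pos ⟨h1, h2, h3⟩]

lemma idx_br3 {x y : ℤ} (h1 : x < 0) (h2 : x < y) (h3 : y < -x) :
    idxZ (x, y) = (2*x+1)^2 + (-5*x - 1 - y) := by
  rw [idxZ, if_neg (by dsimp only; omega), if_neg (by dsimp only; omega), if_pos ⟨h1, h2, h3⟩]

lemma idx_br4 {x y : ℤ} (h1 : y < 0) (h2 : y ≤ x) (h3 : x ≤ -y) :
    idxZ (x, y) = (2*y+1)^2 + (-7*y - 1 + x) := by
  rw [idxZ, if_neg (by dsimp only; omega), if_neg (by dsimp only; omega),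
    if_neg (by dsimp only; omega), if_pos ⟨h1, h2, h3⟩]

/-- Side formulas on the ring of radius `r` (valid on closed sides where stated). -/
lemma idx_sideR {r y : ℤ} (hr : 0 < r) (h1 : -r < y) (h2 : y ≤ r) :
    idxZ (r, y) = (2*r-1)^2 + (y + r - 1) := idx_br1 hr h1 h2

lemma idx_sideT {r x : ℤ} (hr : 0 < r) (h1 : -r ≤ x) (h2 : x ≤ r) :
    idxZ (x, r) = (2*r-1)^2 + (3*r - 1 - x) := by
  rcases eq_or_lt_of_le h2 with rfl | hlt
  · rw [idx_br1 hr (by omega) le_rfl]; ring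
  · exact idx_br2 hr h1 hlt

lemma idx_sideL {r y : ℤ} (hr : 0 < r) (h1 : -r ≤ y) (h2 : y ≤ r) :
    idxZ (-r, y) = (2*r-1)^2 + (5*r - 1 - y) := by
  rcases eq_or_lt_of_le h1 with rfl | hlow
  · rw [idx_br4 (by omega) (by omega) (by omega)]; ring
  · rcases eq_or_lt_of_le h2 with rfl | hhigh
    · rw [idx_br2 hr (by omega) (by omega)]; ring
    · rw [idx_br3 (by omega) (by omega) (by omega)]; ring

lemma idx_sideB {r x : ℤ} (hr : 0 < r) (h1 : -r ≤ x) (h2 : x ≤ r) :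
    idxZ (x, -r) = (2*r-1)^2 + (7*r - 1 + x) := by
  rw [idx_br4 (by omega) (by omega) (by omega)]; ring

lemma idx_step (x y : ℤ) : idxZ (spiralNext (x, y)) = idxZ (x, y) + 1 := by
  rw [spiralNext]
  by_cases h0 : x = 0 ∧ y = 0
  · rw [if_pos (by exact h0)]
    obtain ⟨rfl, rfl⟩ := h0
    rw [idx_origin, idx_br1 one_pos (by norm_num) (by norm_num)]
    ring
  rw [if_neg (by exact h0)]
  dsimp only
  by_cases h2 : y < 0 ∧ |x| ≤ -y
  · rw [if_pos h2]
    obtain ⟨hy, hxy⟩ := h2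
    have hax := abs_le.1 hxy
    have ep : idxZ (x, y) = (2*y+1)^2 + (-7*y - 1 + x) :=
      idx_br4 hy (by omega) (by omega)
    rcases eq_or_lt_of_le hax.2 with heq | hlt
    · -- x = -y : corner (r, -r), next jumps to ring r+1
      have eq' : idxZ (x+1, y) = (2*(x+1)-1)^2 + (y + (x+1) - 1) :=
        idx_br1 (by omega) (by omega) (by omega)
      rw [ep, eq', heq]; ring
    · have eq' : idxZ (x+1, y) = (2*y+1)^2 + (-7*y - 1 + (x+1)) :=
        idx_br4 hy (by omega) (by omega)
      rw [ep, eq']; ring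
  rw [if_neg h2]
  by_cases h3 : 0 < x ∧ |y| < x
  · rw [if_pos h3]
    obtain ⟨hx, hyx⟩ := h3
    have hay := abs_lt.1 hyx
    have ep : idxZ (x, y) = (2*x-1)^2 + (y + x - 1) := idx_br1 hx hay.1 (by omega)
    have eq' : idxZ (x, y+1) = (2*x-1)^2 + ((y+1) + x - 1) :=
      idx_br1 hx (by omega) (by omega)
    rw [ep, eq']; ring
  rw [if_neg h3]
  by_cases h4 : 0 < y ∧ x ≤ y ∧ -x < y
  · rw [if_pos h4]
    obtain ⟨hy, hxy, hxy'⟩ := h4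
    have eq' : idxZ (x-1, y) = (2*y-1)^2 + (3*y - 1 - (x-1)) :=
      idx_br2 hy (by omega) (by omega)
    rcases eq_or_lt_of_le hxy with heq | hlt
    · -- corner (r, r)
      have ep : idxZ (x, y) = (2*x-1)^2 + (y + x - 1) :=
        idx_br1 (by omega) (by omega) (by omega)
      rw [ep, eq', heq]; ring
    · have ep : idxZ (x, y) = (2*y-1)^2 + (3*y - 1 - x) := idx_br2 hy (by omega) hlt
      rw [ep, eq']; ring
  · rw [if_neg h4]
    -- remaining region: x = -r, -r < y ≤ r
    have hx : x < 0 ∧ x < y ∧ y ≤ -x := by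
      rcases abs_cases x with ⟨e, _⟩ | ⟨e, _⟩ <;> rcases abs_cases y with ⟨f, _⟩ | ⟨f, _⟩ <;>
        omega
    obtain ⟨hx0, hxy, hyx⟩ := hx
    rcases eq_or_lt_of_le hyx with heq | hlt
    · -- y = -x : corner (-r, r)
      have ep : idxZ (x, y) = (2*y-1)^2 + (3*y - 1 - x) :=
        idx_br2 (by omega) (by omega) (by omega)
      have eq' : idxZ (x, y-1) = (2*x+1)^2 + (-5*x - 1 - (y-1)) :=
        idx_br3 hx0 (by omega) (by omega)
      rw [ep, eq', heq]; ring
    · have ep : idxZ (x, y) = (2*x+1)^2 + (-5*x - 1 - y) := idx_br3 hx0 hxy hlt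
      rcases eq_or_lt_of_le (show x + 1 ≤ y by omega) with heq | hlt2
      · -- y = x + 1 : moving into corner (-r, -r)
        have eq' : idxZ (x, y-1) = (2*(y-1)+1)^2 + (-7*(y-1) - 1 + x) :=
          idx_br4 (by omega) (by omega) (by omega)
        rw [ep, eq', ← heq]; ring
      · have eq' : idxZ (x, y-1) = (2*x+1)^2 + (-5*x - 1 - (y-1)) :=
          idx_br3 hx0 (by omega) (by omega)
        rw [ep, eq']; ring

lemma spiral_idx (n : ℕ) : idxZ (spiral n) = n := by
  induction n with
  | zero => exact idx_origin
  | succ n ih =>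
    have h : spiral (n + 1) = spiralNext (spiral n) := Function.iterate_succ_apply' _ _ _
    rw [h, show spiral n = (((spiral n).1 : ℤ), ((spiral n).2 : ℤ)) from rfl, idx_step]
    rw [show ((((spiral n).1 : ℤ), ((spiral n).2 : ℤ))) = spiral n from rfl, ih]
    push_cast; ring

lemma spiral_injective : Function.Injective spiral := by
  intro m n h
  have := spiral_idx m
  rw [h, spiral_idx] at this
  exact_mod_cast this.symm

end PsiAux
namespace PsiAux

lemma idx_sideL' {x y : ℤ} (hx : x < 0) (h1 : x ≤ y) (h2 : y ≤ -x) :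
    idxZ (x, y) = (2*x+1)^2 + (-5*x - 1 - y) := by
  rcases eq_or_lt_of_le h1 with heq | hlow
  · rw [← heq, idx_br4 (x := x) (y := x) hx le_rfl (by omega)]; ring
  · rcases eq_or_lt_of_le h2 with heq | hhigh
    · rw [heq, idx_br2 (x := x) (y := -x) (by omega) (by omega) (by omega)]; ring
    · exact idx_br3 hx hlow hhigh

lemma idx_nonneg (p : ℤ × ℤ) : 0 ≤ idxZ p := by
  obtain ⟨x, y⟩ := p
  rw [idxZ]
  dsimp only
  split_ifs with h1 h2 h3 h4
  · nlinarith [sq_nonneg (2*x-1), h1.1, h1.2.1, h1.2.2]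
  · nlinarith [sq_nonneg (2*y-1), h2.1, h2.2.1, h2.2.2]
  · nlinarith [sq_nonneg (2*x+1), h3.1, h3.2.1, h3.2.2]
  · nlinarith [sq_nonneg (2*y+1), h4.1, h4.2.1, h4.2.2]
  · exact le_rfl

lemma sides_cover (x y : ℤ) : (x = 0 ∧ y = 0) ∨ (0 < x ∧ -x < y ∧ y ≤ x)
    ∨ (0 < y ∧ -y ≤ x ∧ x ≤ y) ∨ (x < 0 ∧ x ≤ y ∧ y ≤ -x)
    ∨ (y < 0 ∧ y ≤ x ∧ x ≤ -y) := by omega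

set_option maxHeartbeats 1000000 in
lemma idx_gap {p q : ℤ × ℤ} (hadj : latticeZ2.Adj p q) (hlt : idxZ p < idxZ q) :
    (idxZ q - idxZ p - 1)^2 ≤ 36 * (idxZ p + 1) := by
  obtain ⟨x, y⟩ := q
  obtain ⟨u, v⟩ := p
  rw [lat_adj] at hadj
  dsimp only at hadj
  have hdir : (u = x - 1 ∧ y = v) ∨ (u = x + 1 ∧ y = v)
      ∨ (x = u ∧ v = y - 1) ∨ (x = u ∧ v = y + 1) := by
    rcases abs_cases (u - x) with ⟨e1, _⟩ | ⟨e1, _⟩ <;>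
      rcases abs_cases (v - y) with ⟨e2, _⟩ | ⟨e2, _⟩ <;> omega
  rcases sides_cover x y with ⟨rfl, rfl⟩ | hR | hT | hL | hB
  · rw [idx_origin] at hlt
    have := idx_nonneg (u, v); omega
  · -- q on the right side: q = (x, y), 0 < x, -x < y ≤ x
    obtain ⟨hx, hy1, hy2⟩ := hR
    have eqq : idxZ (x, y) = (2*x-1)^2 + (y + x - 1) := idx_br1 hx hy1 hy2
    rcases hdir with ⟨rfl, rfl⟩ | ⟨rfl, rfl⟩ | ⟨rfl, rfl⟩ | ⟨rfl, rfl⟩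
    · -- p = (x-1, y), west
      by_cases hcy : y = x
      · have ep : idxZ (x-1, y) = (2*x-1)^2 + (3*x - 1 - (x-1)) := by
          rw [hcy]; exact idx_sideT hx (by omega) (by omega)
        rw [ep, eqq] at hlt; linarith
      · by_cases hx1 : x = 1
        · have hy0 : y = 0 := by omega
          rw [hx1, hy0] at eqq ⊢
          rw [show ((1:ℤ) - 1, (0:ℤ)) = ((0:ℤ), (0:ℤ)) by norm_num, idx_origin, eqq]
          norm_num
        · have hx2 : 2 ≤ x := by omega
          by_cases hyb : y = -x + 1
          · have ep : idxZ (x-1, y) = (2*y+1)^2 + (-7*y - 1 + (x-1)) := by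
              exact idx_br4 (by omega) (by omega) (by omega)
            have hD : idxZ (x, y) = idxZ (x-1, y) + 1 := by
              rw [ep, eqq, hyb]; ring
            rw [hD]
            have := idx_nonneg (x-1, y)
            nlinarith
          · have ep : idxZ (x-1, y) = (2*(x-1)-1)^2 + (y + (x-1) - 1) :=
              idx_br1 (by omega) (by omega) (by omega)
            rw [ep, eqq]
            ring_nf
            nlinarith [sq_nonneg (x-2), hx2, show -x + 2 ≤ y by omega]
    · -- p = (x+1, y), east : outward, excluded
      have ep : idxZ (x+1, y) = (2*(x+1)-1)^2 + (y + (x+1) - 1) :=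
        idx_br1 (by omega) (by omega) (by omega)
      rw [ep, eqq] at hlt; nlinarith
    · -- p = (x, y-1), south
      by_cases hys : -x < y - 1
      · have ep : idxZ (x, y-1) = (2*x-1)^2 + ((y-1) + x - 1) := idx_br1 hx hys (by omega)
        have hD : idxZ (x, y) = idxZ (x, y-1) + 1 := by rw [ep, eqq]; ring
        rw [hD]
        have := idx_nonneg (x, y-1)
        nlinarith
      · have hyb : y = -x + 1 := by omega
        have ep : idxZ (x, y-1) = (2*(y-1)+1)^2 + (-7*(y-1) - 1 + x) :=
          idx_br4 (by omega) (by omega) (by omega)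
        rw [ep, eqq, hyb] at hlt; nlinarith
    · -- p = (x, y+1), north
      by_cases hyn : y + 1 ≤ x
      · have ep : idxZ (x, y+1) = (2*x-1)^2 + ((y+1) + x - 1) :=
          idx_br1 hx (by omega) hyn
        rw [ep, eqq] at hlt; linarith
      · have hcy : y = x := by omega
        have ep : idxZ (x, y+1) = (2*(y+1)-1)^2 + (3*(y+1) - 1 - x) := by
          exact idx_sideT (by omega) (by omega) (by omega)
        rw [ep, eqq, hcy] at hlt; nlinarith
  · -- q on the top side: 0 < y, -y ≤ x ≤ y
    obtain ⟨hy, hx1, hx2⟩ := hT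
    have eqq : idxZ (x, y) = (2*y-1)^2 + (3*y - 1 - x) := idx_sideT hy hx1 hx2
    rcases hdir with ⟨rfl, rfl⟩ | ⟨rfl, rfl⟩ | ⟨rfl, rfl⟩ | ⟨rfl, rfl⟩
    · -- p = (x-1, y), west
      by_cases hxw : -y ≤ x - 1
      · have ep : idxZ (x-1, y) = (2*y-1)^2 + (3*y - 1 - (x-1)) :=
          idx_sideT hy hxw (by omega)
        rw [ep, eqq] at hlt; linarith
      · have hxc : x = -y := by omega
        have ep : idxZ (x-1, y) = (2*(x-1)+1)^2 + (-5*(x-1) - 1 - y) :=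
          idx_sideL' (by omega) (by omega) (by omega)
        rw [ep, eqq, hxc] at hlt; nlinarith
    · -- p = (x+1, y), east
      by_cases hxe : x + 1 ≤ y
      · have ep : idxZ (x+1, y) = (2*y-1)^2 + (3*y - 1 - (x+1)) :=
          idx_sideT hy (by omega) hxe
        have hD : idxZ (x, y) = idxZ (x+1, y) + 1 := by rw [ep, eqq]; ring
        rw [hD]
        have := idx_nonneg (x+1, y)
        nlinarith
      · have hxc : x = y := by omega
        have ep : idxZ (x+1, y) = (2*(x+1)-1)^2 + (y + (x+1) - 1) :=
          idx_br1 (by omega) (by omega) (by omega)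
        rw [ep, eqq, hxc] at hlt; nlinarith
    · -- p = (x, y-1), south : inward
      by_cases hcx : x = y
      · have ep : idxZ (x, y-1) = (2*y-1)^2 + ((y-1) + y - 1) := by
          rw [hcx]; exact idx_br1 hy (by omega) (by omega)
        have hD : idxZ (x, y) = idxZ (x, y-1) + 1 := by rw [ep, eqq, hcx]; ring
        rw [hD]
        have := idx_nonneg (x, y-1)
        nlinarith
      · by_cases hcx2 : x = -y
        · have ep : idxZ (x, y-1) = (2*x+1)^2 + (-5*x - 1 - (y-1)) := by
            exact idx_sideL' (by omega) (by omega) (by omega)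
          rw [ep, eqq, hcx2] at hlt; nlinarith
        · by_cases hy1 : y = 1
          · have hx0 : x = 0 := by omega
            rw [hx0, hy1] at eqq ⊢
            rw [show ((0:ℤ), (1:ℤ) - 1) = ((0:ℤ), (0:ℤ)) by norm_num, idx_origin, eqq]
            norm_num
          · have hy2 : 2 ≤ y := by omega
            have ep : idxZ (x, y-1) = (2*(y-1)-1)^2 + (3*(y-1) - 1 - x) :=
              idx_sideT (by omega) (by omega) (by omega)
            rw [ep, eqq]
            ring_nf
            nlinarith [sq_nonneg (y-2), hy2, show x ≤ y - 1 by omega]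
    · -- p = (x, y+1), north : outward, excluded
      have ep : idxZ (x, y+1) = (2*(y+1)-1)^2 + (3*(y+1) - 1 - x) :=
        idx_sideT (by omega) (by omega) (by omega)
      rw [ep, eqq] at hlt; nlinarith
  · -- q on the left side: x < 0, x ≤ y ≤ -x
    obtain ⟨hx, hy1, hy2⟩ := hL
    have eqq : idxZ (x, y) = (2*x+1)^2 + (-5*x - 1 - y) := idx_sideL' hx hy1 hy2
    rcases hdir with ⟨rfl, rfl⟩ | ⟨rfl, rfl⟩ | ⟨rfl, rfl⟩ | ⟨rfl, rfl⟩
    · -- p = (x-1, y), west : outward, excluded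
      have ep : idxZ (x-1, y) = (2*(x-1)+1)^2 + (-5*(x-1) - 1 - y) :=
        idx_sideL' (by omega) (by omega) (by omega)
      rw [ep, eqq] at hlt; nlinarith
    · -- p = (x+1, y), east : inward
      by_cases hcy : y = -x
      · have ep : idxZ (x+1, y) = (2*y-1)^2 + (3*y - 1 - (x+1)) := by
          exact idx_sideT (by omega) (by omega) (by omega)
        have hD : idxZ (x, y) = idxZ (x+1, y) + 1 := by rw [ep, eqq, hcy]; ring
        rw [hD]
        have := idx_nonneg (x+1, y)
        nlinarith
      · by_cases hcy2 : y = x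
        · have ep : idxZ (x+1, y) = (2*y+1)^2 + (-7*y - 1 + (x+1)) :=
            idx_br4 (by omega) (by omega) (by omega)
          rw [ep, eqq, hcy2] at hlt; nlinarith
        · by_cases hx1 : x = -1
          · have hy0 : y = 0 := by omega
            rw [hx1, hy0] at eqq ⊢
            rw [show ((-1:ℤ) + 1, (0:ℤ)) = ((0:ℤ), (0:ℤ)) by norm_num, idx_origin, eqq]
            norm_num
          · have hx2 : x ≤ -2 := by omega
            have ep : idxZ (x+1, y) = (2*(x+1)+1)^2 + (-5*(x+1) - 1 - y) :=
              idx_sideL' (by omega) (by omega) (by omega)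
            rw [ep, eqq]
            ring_nf
            nlinarith [sq_nonneg (5*x + 7), hx2, show y ≤ -x - 1 by omega]
    · -- p = (x, y-1), south
      by_cases hys : x ≤ y - 1
      · have ep : idxZ (x, y-1) = (2*x+1)^2 + (-5*x - 1 - (y-1)) :=
          idx_sideL' hx hys (by omega)
        rw [ep, eqq] at hlt; linarith
      · have hcy : y = x := by omega
        have ep : idxZ (x, y-1) = (2*(y-1)+1)^2 + (-7*(y-1) - 1 + x) :=
          idx_br4 (by omega) (by omega) (by omega)
        rw [ep, eqq, hcy] at hlt; nlinarith
    · -- p = (x, y+1), north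
      by_cases hyn : y + 1 ≤ -x
      · have ep : idxZ (x, y+1) = (2*x+1)^2 + (-5*x - 1 - (y+1)) :=
          idx_sideL' hx (by omega) hyn
        have hD : idxZ (x, y) = idxZ (x, y+1) + 1 := by rw [ep, eqq]; ring
        rw [hD]
        have := idx_nonneg (x, y+1)
        nlinarith
      · have hcy : y = -x := by omega
        have ep : idxZ (x, y+1) = (2*(y+1)-1)^2 + (3*(y+1) - 1 - x) := by
          exact idx_sideT (by omega) (by omega) (by omega)
        rw [ep, eqq, hcy] at hlt; nlinarith
  · -- q on the bottom side: y < 0, y ≤ x ≤ -y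
    obtain ⟨hy, hx1, hx2⟩ := hB
    have eqq : idxZ (x, y) = (2*y+1)^2 + (-7*y - 1 + x) := idx_br4 hy hx1 hx2
    rcases hdir with ⟨rfl, rfl⟩ | ⟨rfl, rfl⟩ | ⟨rfl, rfl⟩ | ⟨rfl, rfl⟩
    · -- p = (x-1, y), west
      by_cases hxw : y ≤ x - 1
      · have ep : idxZ (x-1, y) = (2*y+1)^2 + (-7*y - 1 + (x-1)) :=
          idx_br4 hy hxw (by omega)
        have hD : idxZ (x, y) = idxZ (x-1, y) + 1 := by rw [ep, eqq]; ring
        rw [hD]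
        have := idx_nonneg (x-1, y)
        nlinarith
      · have hcx : x = y := by omega
        have ep : idxZ (x-1, y) = (2*(x-1)+1)^2 + (-5*(x-1) - 1 - y) :=
          idx_sideL' (by omega) (by omega) (by omega)
        rw [ep, eqq, hcx] at hlt; nlinarith
    · -- p = (x+1, y), east
      by_cases hxe : x + 1 ≤ -y
      · have ep : idxZ (x+1, y) = (2*y+1)^2 + (-7*y - 1 + (x+1)) :=
          idx_br4 hy (by omega) hxe
        rw [ep, eqq] at hlt; linarith
      · have hcx : x = -y := by omega
        have ep : idxZ (x+1, y) = (2*(x+1)-1)^2 + (y + (x+1) - 1) :=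
          idx_br1 (by omega) (by omega) (by omega)
        rw [ep, eqq, hcx] at hlt; nlinarith
    · -- p = (x, y-1), south : outward, excluded
      have ep : idxZ (x, y-1) = (2*(y-1)+1)^2 + (-7*(y-1) - 1 + x) :=
        idx_br4 (by omega) (by omega) (by omega)
      rw [ep, eqq] at hlt; nlinarith
    · -- p = (x, y+1), north : inward
      by_cases hcx : x = -y
      · have ep : idxZ (x, y+1) = (2*x-1)^2 + ((y+1) + x - 1) := by
          exact idx_br1 (by omega) (by omega) (by omega)
        rw [ep, eqq, hcx]
        ring_nf
        nlinarith [sq_nonneg (10*y + 7), hy]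
      · by_cases hcx2 : x = y
        · have ep : idxZ (x, y+1) = (2*x+1)^2 + (-5*x - 1 - (y+1)) :=
            idx_sideL' (by omega) (by omega) (by omega)
          have hD : idxZ (x, y) = idxZ (x, y+1) + 1 := by rw [ep, eqq, hcx2]; ring
          rw [hD]
          have := idx_nonneg (x, y+1)
          nlinarith
        · by_cases hy1 : y = -1
          · have hx0 : x = 0 := by omega
            rw [hx0, hy1] at eqq ⊢
            rw [show ((0:ℤ), (-1:ℤ) + 1) = ((0:ℤ), (0:ℤ)) by norm_num, idx_origin, eqq]
            norm_num
          · have hy2 : y ≤ -2 := by omega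
            have ep : idxZ (x, y+1) = (2*(y+1)+1)^2 + (-7*(y+1) - 1 + x) :=
              idx_br4 (by omega) (by omega) (by omega)
            rw [ep, eqq]
            ring_nf
            nlinarith [sq_nonneg (y+2), hy2, show y + 1 ≤ x by omega]

end PsiAux
namespace PsiAux

/-- `∂` with the convention `∂⁰ = 1`, shifted: `EE m = m + ∂⁰_m` is the label of the
last child of `m`. -/
def EE (m : ℕ) : ℕ := m + isoNum₀ latticeZ2 m

lemma iso0_pos (m : ℕ) : 1 ≤ isoNum₀ latticeZ2 m := by
  rw [isoNum₀]
  split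
  · exact le_rfl
  · exact le_trans (by norm_num) (iso_ge_two (by omega))

lemma iso0_eq {m : ℕ} (hm : 1 ≤ m) : isoNum₀ latticeZ2 m = isoNum latticeZ2 m := by
  rw [isoNum₀, if_neg (by omega)]

lemma EE_lt (m : ℕ) : m < EE m := by
  have := iso0_pos m
  rw [EE]; omega

lemma EE_mono : Monotone EE := by
  refine monotone_nat_of_le_succ fun m => ?_
  rcases Nat.eq_zero_or_pos m with rfl | hm
  · have := iso0_pos 1
    rw [EE, EE, isoNum₀]; simp
  · rw [EE, EE, iso0_eq hm, iso0_eq (by omega)]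
    have := iso_succ m
    omega

lemma EE_iter_le {s t : ℕ} (h : s ≤ t) (i : ℕ) : EE^[s] i ≤ EE^[t] i := by
  obtain ⟨u, rfl⟩ := Nat.exists_eq_add_of_le h
  induction u with
  | zero => exact le_rfl
  | succ u ih =>
    have h1 : EE^[s] i ≤ EE^[s + u] i := ih (by omega)
    have h2 : EE^[s + u + 1] i = EE (EE^[s + u] i) := Function.iterate_succ_apply' _ _ _
    have h3 : s + (u + 1) = s + u + 1 := by omega
    rw [h3, h2]
    exact le_trans h1 (EE_lt _).le

/-- The parent function of the comparison tree (on labels in `ℕ`). -/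
def par (b : ℕ) : ℕ := sInf {a | 1 ≤ a ∧ b ≤ EE a}

lemma par_mem (b : ℕ) : 1 ≤ par b ∧ b ≤ EE (par b) := by
  have hne : {a | 1 ≤ a ∧ b ≤ EE a}.Nonempty := by
    refine ⟨max b 1, le_max_right _ _, ?_⟩
    exact le_trans (le_max_left _ _) (EE_lt _).le
  exact Nat.sInf_mem hne

lemma par_pos (b : ℕ) : 1 ≤ par b := (par_mem b).1

lemma par_lt {b : ℕ} (hb : 2 ≤ b) : par b < b := by
  have h : par b ≤ b - 1 := Nat.sInf_le ⟨by omega, by have := EE_lt (b-1); omega⟩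
  omega

lemma par_low {b : ℕ} (hb : 2 ≤ b) : EE (par b - 1) < b := by
  rcases Nat.eq_or_lt_of_le (par_pos b) with h1 | h2
  · rw [← h1]
    rw [show (1:ℕ) - 1 = 0 from rfl, EE, isoNum₀]
    simpa using (show 1 < b by omega)
  · by_contra hcon
    push_neg at hcon
    have : par b ≤ par b - 1 := Nat.sInf_le ⟨by omega, hcon⟩
    omega

lemma par_eq_of {a b : ℕ} (ha : 1 ≤ a) (h1 : EE (a-1) < b) (h2 : b ≤ EE a) : par b = a := by
  have hle : par b ≤ a := Nat.sInf_le ⟨ha, h2⟩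
  by_contra hne
  have hlt : par b < a := by omega
  have : EE (par b) ≤ EE (a - 1) := EE_mono (by omega)
  have := (par_mem b).2
  omega

lemma par_one : par 1 = 1 := by
  have h := par_pos 1
  have : par 1 ≤ 1 := Nat.sInf_le ⟨le_rfl, (EE_lt 1).le⟩
  omega

/-- Depth in the comparison tree. -/
def dep (b : ℕ) : ℕ :=
  if h : b ≤ 1 then 0
  else
    have : par b < b := par_lt (by omega)
    dep (par b) + 1
termination_by b

lemma dep_small {b : ℕ} (h : b ≤ 1) : dep b = 0 := by rw [dep, dif_pos h]

lemma dep_eq {b : ℕ} (hb : 2 ≤ b) : dep b = dep (par b) + 1 := by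
  rw [dep, dif_neg (by omega)]

lemma dep_pos_iff {b : ℕ} : 1 ≤ dep b ↔ 2 ≤ b := by
  constructor
  · intro h
    by_contra hcon
    rw [dep_small (by omega)] at h
    omega
  · intro h; rw [dep_eq h]; omega

lemma par_iter_one : ∀ b : ℕ, 1 ≤ b → par^[dep b] b = 1 := by
  intro b
  induction b using Nat.strong_induction_on with
  | _ b ih =>
    intro hb
    rcases Nat.lt_or_ge b 2 with h | h
    · have hb1 : b = 1 := by omega
      rw [hb1, dep_small (by omega)]
      rfl
    · rw [dep_eq h, Function.iterate_succ_apply]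
      exact ih (par b) (par_lt h) (par_pos b)

end PsiAux
namespace PsiAux

lemma cAdj_iff (a b : ℕ+) :
    cAdj latticeZ2 a b ↔ (EE ((a:ℕ) - 1) < (b:ℕ) ∧ (b:ℕ) ≤ EE (a:ℕ)) := by
  have ha1 : 1 ≤ (a:ℕ) := a.2
  have hEa : EE (a:ℕ) = (a:ℕ) + isoNum latticeZ2 (a:ℕ) := by rw [EE, iso0_eq ha1]
  constructor
  · rintro ⟨hab, h1, h2⟩
    exact ⟨h1, by omega⟩
  · rintro ⟨h1, h2⟩
    have hlow : (a:ℕ) ≤ EE ((a:ℕ) - 1) := by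
      have := iso0_pos ((a:ℕ) - 1)
      rw [EE]; omega
    refine ⟨?_, h1, by omega⟩
    rw [← PNat.coe_lt_coe]
    omega

lemma adjGc_iff (a b : ℕ+) :
    GcZ2.Adj a b ↔ (a ≠ b ∧ ((a:ℕ) = par (b:ℕ) ∨ (b:ℕ) = par (a:ℕ))) := by
  have hur : GcZ2.Adj a b ↔ (cAdj latticeZ2 a b ∨ cAdj latticeZ2 b a) := Iff.rfl
  rw [hur, cAdj_iff, cAdj_iff]
  constructor
  · rintro (⟨h1, h2⟩ | ⟨h1, h2⟩)
    · have hlow : (a:ℕ) ≤ EE ((a:ℕ) - 1) := by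
        have := iso0_pos ((a:ℕ) - 1); rw [EE]; omega
      refine ⟨?_, Or.inl (par_eq_of a.2 h1 h2).symm⟩
      intro hcon; subst hcon; omega
    · have hlow : (b:ℕ) ≤ EE ((b:ℕ) - 1) := by
        have := iso0_pos ((b:ℕ) - 1); rw [EE]; omega
      refine ⟨?_, Or.inr (par_eq_of b.2 h1 h2).symm⟩
      intro hcon; subst hcon; omega
  · rintro ⟨hne, hpar | hpar⟩
    · have hb2 : 2 ≤ (b:ℕ) := by
        by_contra hcon
        have hb1 : (b:ℕ) = 1 := by have := b.pos; omega
        rw [hb1, par_one] at hpar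
        exact hne (PNat.coe_inj.1 (by omega))
      exact Or.inl ⟨by rw [hpar]; exact par_low hb2, by rw [hpar]; exact (par_mem _).2⟩
    · have ha2 : 2 ≤ (a:ℕ) := by
        by_contra hcon
        have ha1 : (a:ℕ) = 1 := by have := a.pos; omega
        rw [ha1, par_one] at hpar
        exact hne (PNat.coe_inj.1 (by omega))
      exact Or.inr ⟨by rw [hpar]; exact par_low ha2, by rw [hpar]; exact (par_mem _).2⟩

lemma adj_dep {a b : ℕ+} (h : GcZ2.Adj a b) :
    ((a:ℕ) = par (b:ℕ) ∧ dep (a:ℕ) + 1 = dep (b:ℕ)) ∨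
    ((b:ℕ) = par (a:ℕ) ∧ dep (b:ℕ) + 1 = dep (a:ℕ)) := by
  obtain ⟨hne, hpar | hpar⟩ := (adjGc_iff a b).1 h
  · have hb2 : 2 ≤ (b:ℕ) := by
      by_contra hcon
      have hb1 : (b:ℕ) = 1 := by have := b.pos; omega
      rw [hb1, par_one] at hpar
      exact hne (PNat.coe_injective (by omega))
    exact Or.inl ⟨hpar, by rw [dep_eq hb2, hpar]⟩
  · have ha2 : 2 ≤ (a:ℕ) := by
      by_contra hcon
      have ha1 : (a:ℕ) = 1 := by have := a.pos; omega
      rw [ha1, par_one] at hpar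
      exact hne (PNat.coe_injective (by omega))
    exact Or.inr ⟨hpar, by rw [dep_eq ha2, hpar]⟩

lemma reach_one : ∀ v : ℕ+, GcZ2.Reachable 1 v := by
  suffices H : ∀ n (v : ℕ+), (v:ℕ) ≤ n → GcZ2.Reachable 1 v by
    intro v; exact H (v:ℕ) v le_rfl
  intro n
  induction n with
  | zero => exact fun v hv => absurd v.pos (by omega)
  | succ n ih =>
    intro v hv
    rcases Nat.lt_or_ge (v:ℕ) 2 with h | h
    · have hv1 : v = 1 := by rw [← PNat.coe_eq_one_iff]; have := v.pos; omega
      rw [hv1]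
    · set u : ℕ+ := ⟨par (v:ℕ), par_pos _⟩ with hu
      have hulv : (u:ℕ) < (v:ℕ) := par_lt h
      have hadj : GcZ2.Adj u v := by
        rw [adjGc_iff]
        exact ⟨fun hc => by rw [hc] at hulv; omega, Or.inl rfl⟩
      exact (ih u (by omega)).trans hadj.reachable

lemma reach (u v : ℕ+) : GcZ2.Reachable u v := (reach_one u).symm.trans (reach_one v)

lemma walk_dep {u v : ℕ+} (W : GcZ2.Walk u v) :
    (dep (v:ℕ) : ℤ) ≤ dep (u:ℕ) + W.length ∧ (dep (u:ℕ) : ℤ) ≤ dep (v:ℕ) + W.length := by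
  induction W with
  | nil => simp
  | @cons u w v h W ih =>
    rcases adj_dep h with ⟨_, hd⟩ | ⟨_, hd⟩ <;>
    · rw [SimpleGraph.Walk.length_cons]
      push_cast
      omega

lemma dist_dep_bound (u v : ℕ+) :
    (dep (v:ℕ) : ℤ) ≤ dep (u:ℕ) + GcZ2.dist u v ∧
    (dep (u:ℕ) : ℤ) ≤ dep (v:ℕ) + GcZ2.dist u v := by
  obtain ⟨W, hW⟩ := (reach u v).exists_walk_length_eq_dist
  have h := walk_dep W
  rw [hW] at h
  exact h

/-- `i` is an ancestor of `k` in the comparison tree. -/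
def anc (i k : ℕ+) : Prop :=
  ∃ d : ℕ, par^[d] (k:ℕ) = (i:ℕ) ∧ dep (i:ℕ) + d = dep (k:ℕ)

lemma anc_walk {i k : ℕ+} (h : anc i k) :
    ∃ W : GcZ2.Walk i k, W.length = dep (k:ℕ) - dep (i:ℕ) := by
  obtain ⟨d, hp, hd⟩ := h
  induction d generalizing k with
  | zero =>
    have : k = i := PNat.coe_injective hp
    subst this
    exact ⟨SimpleGraph.Walk.nil, by simp⟩
  | succ d ih =>
    have hk2 : 2 ≤ (k:ℕ) := dep_pos_iff.1 (by omega)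
    set m : ℕ+ := ⟨par (k:ℕ), par_pos _⟩ with hm
    have hpm : par^[d] ((m:ℕ)) = (i:ℕ) := by
      have h1 : par^[d+1] (k:ℕ) = par^[d] (par (k:ℕ)) := Function.iterate_succ_apply _ _ _
      rw [show ((m:ℕ)) = par (k:ℕ) from rfl, ← h1]
      exact hp
    have hdm : dep (i:ℕ) + d = dep (m:ℕ) := by
      have hde := dep_eq hk2
      have : dep ((m:ℕ)) = dep (par (k:ℕ)) := rfl
      omega
    have hadj : GcZ2.Adj m k := by
      rw [adjGc_iff]
      have : (m:ℕ) < (k:ℕ) := par_lt hk2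
      exact ⟨fun hc => by rw [hc] at this; omega, Or.inl rfl⟩
    obtain ⟨W, hW⟩ := ih hpm hdm
    refine ⟨W.concat hadj, ?_⟩
    rw [SimpleGraph.Walk.length_concat, hW]
    omega

lemma anc_dist {i k : ℕ+} (h : anc i k) :
    dep (i:ℕ) + GcZ2.dist i k = dep (k:ℕ) := by
  obtain ⟨W, hW⟩ := anc_walk h
  have h1 : GcZ2.dist i k ≤ W.length := SimpleGraph.dist_le W
  have h2 := (dist_dep_bound i k).1
  obtain ⟨d, hp, hd⟩ := h
  push_cast at h2
  omega

lemma walk_anc {i k : ℕ+} (W : GcZ2.Walk i k) :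
    (W.length : ℤ) = dep (k:ℕ) - dep (i:ℕ) → anc i k := by
  induction W with
  | nil => exact fun _ => ⟨0, rfl, by omega⟩
  | @cons i w k h W ih =>
    intro hlen
    rw [SimpleGraph.Walk.length_cons] at hlen
    push_cast at hlen
    rcases adj_dep h with ⟨hpar, hd⟩ | ⟨hpar, hd⟩
    · have hW : (W.length : ℤ) = dep (k:ℕ) - dep (w:ℕ) := by omega
      obtain ⟨d, hp, hdd⟩ := ih hW
      refine ⟨d + 1, ?_, by omega⟩
      rw [Function.iterate_succ_apply', hp]
      exact hpar.symm
    · exfalso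
      have h2 := walk_dep W
      omega

lemma dist_one_eq (v : ℕ+) : GcZ2.dist 1 v = dep (v:ℕ) := by
  have h1 : anc 1 v := by
    refine ⟨dep (v:ℕ), ?_, ?_⟩
    · have := par_iter_one (v:ℕ) v.pos
      simpa using this
    · simp [dep_small]
  have := anc_dist h1
  have hd1 : dep ((1:ℕ+):ℕ) = 0 := by simp [dep_small]
  omega

lemma lies_anc {i k : ℕ+} (h : liesOnPathFromOne i k) : anc i k := by
  have h' : GcZ2.dist 1 i + GcZ2.dist i k = GcZ2.dist 1 k := h
  rw [dist_one_eq, dist_one_eq] at h'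
  obtain ⟨W, hW⟩ := (reach i k).exists_walk_length_eq_dist
  exact walk_anc W (by rw [hW]; push_cast; omega)

lemma anc_lies {i k : ℕ+} (h : anc i k) : liesOnPathFromOne i k := by
  show GcZ2.dist 1 i + GcZ2.dist i k = GcZ2.dist 1 k
  rw [dist_one_eq, dist_one_eq]
  have := anc_dist h
  omega

lemma chain_lb : ∀ (d i k : ℕ), 1 ≤ i → par^[d+1] k = i → dep i + (d+1) = dep k →
    EE^[d] i < k := by
  intro d
  induction d with
  | zero =>
    intro i k hi hp hd
    have hk2 : 2 ≤ k := dep_pos_iff.1 (by omega)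
    have hpk : par k = i := by simpa using hp
    have := par_lt hk2
    simpa [hpk] using this
  | succ d ih =>
    intro i k hi hp hd
    have hk2 : 2 ≤ k := dep_pos_iff.1 (by omega)
    have hpm : par^[d+1] (par k) = i := by
      rw [← Function.iterate_succ_apply]; exact hp
    have hdm : dep i + (d+1) = dep (par k) := by
      have := dep_eq hk2; omega
    have hm := ih i (par k) hi hpm hdm
    have hlow := par_low hk2
    have hit : EE^[d+1] i = EE (EE^[d] i) := Function.iterate_succ_apply' _ _ _
    have hmono : EE (EE^[d] i) ≤ EE (par k - 1) := EE_mono (by omega)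
    omega

lemma least_depth {i j k : ℕ+}
    (hleast : IsLeast {k' : ℕ+ | j ≤ k' ∧ liesOnPathFromOne i k'} k)
    (hj : (j:ℕ) ≤ EE^[3] (i:ℕ) + 1) : dep (k:ℕ) ≤ dep (i:ℕ) + 4 := by
  obtain ⟨⟨hjk, hlies⟩, hlb⟩ := hleast
  obtain ⟨d, hp, hd⟩ := lies_anc hlies
  by_contra hcon
  push_neg at hcon
  have hd5 : 5 ≤ d := by omega
  have hk2 : 2 ≤ (k:ℕ) := dep_pos_iff.1 (by omega)
  set m : ℕ+ := ⟨par (k:ℕ), par_pos _⟩ with hm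
  have hmk : (m:ℕ) = par (k:ℕ) := rfl
  have hpm : par^[d-1] ((m:ℕ)) = (i:ℕ) := by
    rw [hmk]
    have h1 : par^[(d-1)+1] (k:ℕ) = par^[d-1] (par (k:ℕ)) := Function.iterate_succ_apply _ _ _
    have h2 : (d-1)+1 = d := by omega
    rw [h2] at h1
    rw [← h1]; exact hp
  have hdm : dep (i:ℕ) + (d-1) = dep ((m:ℕ)) := by
    have := dep_eq hk2
    rw [hmk]; omega
  have hchain : EE^[d-2] (i:ℕ) < (m:ℕ) := by
    have h2 : (d-2)+1 = d-1 := by omega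
    refine chain_lb (d-2) (i:ℕ) (m:ℕ) i.pos ?_ ?_
    · rw [h2]; exact hpm
    · rw [h2]; exact hdm
  have h3 : EE^[3] (i:ℕ) ≤ EE^[d-2] (i:ℕ) := EE_iter_le (by omega) _
  have hjm : j ≤ m := by
    rw [← PNat.coe_le_coe]
    omega
  have hliesm : liesOnPathFromOne i m := anc_lies ⟨d-1, hpm, hdm⟩
  have hkm := hlb ⟨hjm, hliesm⟩
  rw [← PNat.coe_le_coe] at hkm
  have hmlt : (m:ℕ) < (k:ℕ) := by rw [hmk]; exact par_lt hk2
  omega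

lemma edge_loc {i k a b : ℕ+} (hlies : liesOnPathFromOne i k) (he : edgeOnPath i k a b) :
    ∃ (x : ℕ+) (dd : ℕ), ((x = a ∧ (a:ℕ) = par (b:ℕ)) ∨ (x = b ∧ (b:ℕ) = par (a:ℕ)))
      ∧ dd + 1 ≤ GcZ2.dist i k ∧ par^[dd] ((x:ℕ)) = (i:ℕ)
      ∧ dep (i:ℕ) + dd = dep (x:ℕ) := by
  obtain ⟨hab, hcase⟩ := he
  have hanc := lies_anc hlies
  have ht := anc_dist hanc
  rcases hcase with h1 | h1
  · have hA := dist_dep_bound i a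
    have hB := dist_dep_bound b k
    rcases adj_dep hab with ⟨hpar, hd⟩ | ⟨hpar, hd⟩
    · have hAe : (GcZ2.dist i a : ℤ) = (dep (a:ℕ) : ℤ) - dep (i:ℕ) := by
        push_cast at hA hB ⊢
        omega
      obtain ⟨W, hW⟩ := (reach i a).exists_walk_length_eq_dist
      have hanc2 := walk_anc W (by rw [hW]; exact_mod_cast hAe)
      obtain ⟨dd, hp, hdd⟩ := hanc2
      refine ⟨a, dd, Or.inl ⟨rfl, hpar⟩, ?_, hp, hdd⟩
      have hde : (dd:ℤ) = (GcZ2.dist i a : ℤ) := by push_cast; omega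
      omega
    · exfalso
      push_cast at hA hB
      omega
  · have hA := dist_dep_bound i b
    have hB := dist_dep_bound a k
    rcases adj_dep hab with ⟨hpar, hd⟩ | ⟨hpar, hd⟩
    · exfalso
      push_cast at hA hB
      omega
    · have hAe : (GcZ2.dist i b : ℤ) = (dep (b:ℕ) : ℤ) - dep (i:ℕ) := by
        push_cast at hA hB ⊢
        omega
      obtain ⟨W, hW⟩ := (reach i b).exists_walk_length_eq_dist
      have hanc2 := walk_anc W (by rw [hW]; exact_mod_cast hAe)
      obtain ⟨dd, hp, hdd⟩ := hanc2
      refine ⟨b, dd, Or.inr ⟨rfl, hpar⟩, ?_, hp, hdd⟩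
      have hde : (dd:ℤ) = (GcZ2.dist i b : ℤ) := by push_cast; omega
      omega

end PsiAux
namespace PsiAux

lemma EE_iter3 (A : ℕ) : EE^[3] A = EE (EE (EE A)) := by
  rw [show (3:ℕ) = 2+1 from rfl, Function.iterate_succ_apply',
    show (2:ℕ) = 1+1 from rfl, Function.iterate_succ_apply', Function.iterate_one]

lemma spiral_gap {i j : ℕ+} (hij : i < j)
    (hadj : latticeZ2.Adj (spiral ((i:ℕ)-1)) (spiral ((j:ℕ)-1))) :
    (j:ℕ) ≤ EE^[3] (i:ℕ) + 1 := by
  have hi1 : 1 ≤ (i:ℕ) := i.pos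
  have hj1 : 1 ≤ (j:ℕ) := j.pos
  have hij' : (i:ℕ) < (j:ℕ) := hij
  have hlt : idxZ (spiral ((i:ℕ)-1)) < idxZ (spiral ((j:ℕ)-1)) := by
    rw [spiral_idx, spiral_idx]
    exact_mod_cast (by omega : (i:ℕ)-1 < (j:ℕ)-1)
  have hgap := idx_gap hadj hlt
  rw [spiral_idx, spiral_idx] at hgap
  set g : ℕ := (j:ℕ) - (i:ℕ) - 1 with hg
  have hgnat : g^2 ≤ 36 * (i:ℕ) := by
    have h1 : ((((j:ℕ)-1 : ℕ)) : ℤ) - (((i:ℕ)-1 : ℕ) : ℤ) - 1 = (g : ℤ) := by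
      push_cast [hg]
      omega
    have h2 : ((((i:ℕ)-1 : ℕ)) : ℤ) + 1 = ((i:ℕ) : ℤ) := by push_cast; omega
    rw [h1, h2] at hgap
    exact_mod_cast hgap
  set A := (i:ℕ) with hA
  set B := EE A with hB
  set C := EE B with hC
  have hAB : A < B := EE_lt A
  have hBC : B < C := EE_lt B
  set D1 := isoNum latticeZ2 A with hD1
  set D2 := isoNum latticeZ2 B with hD2
  set D3 := isoNum latticeZ2 C with hD3
  have e1 : B = A + D1 := by rw [hB, EE, iso0_eq hi1]
  have e2 : C = B + D2 := by rw [hC, EE, iso0_eq (by omega)]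
  have e3 : EE C = C + D3 := by rw [EE, iso0_eq (by omega)]
  have hq1 : 4 * A ≤ D1^2 := iso_sq A
  have hq2 : 4 * B ≤ D2^2 := iso_sq B
  have hq3 : 4 * C ≤ D3^2 := iso_sq C
  have key : g ≤ D1 + D2 + D3 := by
    by_contra hcon
    push_neg at hcon
    set M := min D1 (min D2 D3) with hM
    have hM1 : M ≤ D1 := min_le_left _ _
    have hM2 : M ≤ D2 := le_trans (min_le_right _ _) (min_le_left _ _)
    have hM3 : M ≤ D3 := le_trans (min_le_right _ _) (min_le_right _ _)
    have hMsq : 4 * A ≤ M^2 := by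
      rcases le_total D1 (min D2 D3) with h | h
      · rw [hM, min_eq_left h]; exact hq1
      · rcases le_total D2 D3 with h' | h'
        · rw [hM, min_eq_right h, min_eq_left h']; omega
        · rw [hM, min_eq_right h, min_eq_right h']; omega
    have hgM : 3 * M + 1 ≤ g := by omega
    have := Nat.pow_le_pow_left hgM 2
    nlinarith
  have h3 : EE^[3] A = A + D1 + D2 + D3 := by
    rw [EE_iter3, ← hB, ← hC, e3, e2, e1]
  omega

/-- Encoding of the four lattice directions. -/
def dcode (δ : ℤ × ℤ) : Fin 4 :=
  if δ = (1, 0) then 0 else if δ = (-1, 0) then 1 else if δ = (0, 1) then 2 else 3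

lemma adj_diff {p q : ℤ × ℤ} (h : latticeZ2.Adj p q) :
    q - p = (1, 0) ∨ q - p = (-1, 0) ∨ q - p = (0, 1) ∨ q - p = (0, -1) := by
  obtain ⟨x, y⟩ := p
  obtain ⟨u, v⟩ := q
  rw [lat_adj] at h
  dsimp only at h
  have : ((u, v) : ℤ × ℤ) - (x, y) = (u - x, v - y) := rfl
  rw [this]
  rcases abs_cases (x - u) with ⟨e1, _⟩ | ⟨e1, _⟩ <;>
    rcases abs_cases (y - v) with ⟨e2, _⟩ | ⟨e2, _⟩ <;>
  · simp only [Prod.mk.injEq]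
    omega

lemma dcode_inj {δ₁ δ₂ : ℤ × ℤ}
    (h1 : δ₁ = (1, 0) ∨ δ₁ = (-1, 0) ∨ δ₁ = (0, 1) ∨ δ₁ = (0, -1))
    (h2 : δ₂ = (1, 0) ∨ δ₂ = (-1, 0) ∨ δ₂ = (0, 1) ∨ δ₂ = (0, -1))
    (h : dcode δ₁ = dcode δ₂) : δ₁ = δ₂ := by
  rcases h1 with rfl | rfl | rfl | rfl <;> rcases h2 with rfl | rfl | rfl | rfl <;>
    first
      | rfl
      | (exfalso; revert h; norm_num [dcode]; try decide)

end PsiAux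

open PsiAux

/-- **Lemma (bounded multiplicity of `Ψ`).**  Identify `ℤ²` with `ℕ_{≥1}` via the spiral
labelling.  For every edge `{a, b}` of the universal comparison graph `G_c`, there are at
most `16` edges `(i, j)` of the lattice graph (with spiral labels `i < j`) such that
`{a, b}` lies on the path `Ψ(i, j)`, i.e. on the shortest path in `G_c` from `i` to the
smallest `k ≥ j` for which `i` lies on the path from `1` to `k`. -/
theorem Psi_bounded_multiplicity (a b : ℕ+) (hab : GcZ2.Adj a b) :
    {q : ℕ+ × ℕ+ | q.1 < q.2
      ∧ latticeZ2.Adj (spiral ((q.1 : ℕ) - 1)) (spiral ((q.2 : ℕ) - 1))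
      ∧ ∃ k : ℕ+, IsLeast {k' : ℕ+ | q.2 ≤ k' ∧ liesOnPathFromOne q.1 k'} k
          ∧ edgeOnPath q.1 k a b}.encard ≤ 16 := by
  classical
  set S := {q : ℕ+ × ℕ+ | q.1 < q.2
      ∧ latticeZ2.Adj (spiral ((q.1 : ℕ) - 1)) (spiral ((q.2 : ℕ) - 1))
      ∧ ∃ k : ℕ+, IsLeast {k' : ℕ+ | q.2 ≤ k' ∧ liesOnPathFromOne q.1 k'} k
          ∧ edgeOnPath q.1 k a b} with hS
  set m0 : ℕ+ := if (a:ℕ) = par (b:ℕ) then a else b with hm0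
  set f : ℕ+ × ℕ+ → Fin 4 × Fin 4 := fun q =>
    (⟨(dep ((m0:ℕ)) - dep ((q.1:ℕ))) % 4, Nat.mod_lt _ (by norm_num)⟩,
      dcode (spiral ((q.2:ℕ)-1) - spiral ((q.1:ℕ)-1))) with hf
  have key : ∀ q ∈ S, ∃ dd : ℕ, dd < 4 ∧ par^[dd] ((m0:ℕ)) = ((q.1:ℕ))
      ∧ dep ((q.1:ℕ)) + dd = dep ((m0:ℕ)) := by
    rintro ⟨i, j⟩ ⟨hij, hladj, k, hleast, hedge⟩
    have hj3 := spiral_gap hij hladj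
    have hdepk := least_depth hleast hj3
    have hlies : liesOnPathFromOne i k := hleast.1.2
    have hanc := lies_anc hlies
    have hdist := anc_dist hanc
    obtain ⟨x, dd, hx, hdle, hpar, hdd⟩ := edge_loc hlies hedge
    dsimp only at hj3 hdepk hdist hdle hdd hpar ⊢
    have hdd3 : dd < 4 := by omega
    have hxm : x = m0 := by
      rcases hx with ⟨hxa, hpab⟩ | ⟨hxb, hpba⟩
      · rw [hm0, if_pos hpab, hxa]
      · have hne : ¬ ((a:ℕ) = par ((b:ℕ))) := by
          intro hcontra
          by_cases hB : 2 ≤ (b:ℕ)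
          · have h1 := par_lt hB
            by_cases hA : 2 ≤ (a:ℕ)
            · have h2 := par_lt hA
              omega
            · have ha1 : (a:ℕ) = 1 := by have := a.pos; omega
              rw [ha1, par_one] at hpba
              omega
          · have hb1 : (b:ℕ) = 1 := by have := b.pos; omega
            rw [hb1, par_one] at hcontra
            exact hab.ne (PNat.coe_inj.1 (by omega))
        rw [hm0, if_neg hne, hxb]
    rw [hxm] at hpar hdd
    exact ⟨dd, hdd3, hpar, hdd⟩
  have hinj : Set.InjOn f S := by
    rintro ⟨i1, j1⟩ hq1 ⟨i2, j2⟩ hq2 hfeq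
    obtain ⟨dd1, hlt1, hpar1, hdep1⟩ := key _ hq1
    obtain ⟨dd2, hlt2, hpar2, hdep2⟩ := key _ hq2
    obtain ⟨hij1, hladj1, -⟩ := hq1
    obtain ⟨hij2, hladj2, -⟩ := hq2
    have hfst := congrArg (fun z : Fin 4 × Fin 4 => (z.1 : ℕ)) hfeq
    have hsnd := congrArg Prod.snd hfeq
    simp only [hf] at hfst hsnd
    dsimp only at hpar1 hdep1 hpar2 hdep2 hfst hsnd
    have hdd1e : (dep ((m0:ℕ)) - dep ((i1:ℕ))) % 4 = dd1 := by omega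
    have hdd2e : (dep ((m0:ℕ)) - dep ((i2:ℕ))) % 4 = dd2 := by omega
    have hdde : dd1 = dd2 := by
      rw [hdd1e, hdd2e] at hfst
      exact hfst
    have hi : i1 = i2 := by
      rw [← PNat.coe_inj, ← hpar1, ← hpar2, hdde]
    have hdiff := dcode_inj (adj_diff hladj1) (adj_diff hladj2) hsnd
    rw [hi] at hdiff
    have hsp : spiral ((j1:ℕ)-1) = spiral ((j2:ℕ)-1) := by
      have := sub_left_inj.1 hdiff
      exact this
    have hj12 : ((j1:ℕ)-1) = ((j2:ℕ)-1) := spiral_injective hsp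
    have hj : j1 = j2 := by
      rw [← PNat.coe_inj]
      have := j1.pos
      have := j2.pos
      omega
    rw [hi, hj]
  calc S.encard = (f '' S).encard := (hinj.encard_image).symm
    _ ≤ (Set.univ : Set (Fin 4 × Fin 4)).encard := Set.encard_le_encard (Set.subset_univ _)
    _ = 16 := by
        rw [Set.encard_univ]
        simp [ENat.card_eq_coe_fintype_card]
end
end

section
/- Let v_1, v_2, … be a Wang–Wang enumeration of ℤ² and let G_c be the universal comparison graph of the lattice graph (ℤ², ℓ¹). Then for every edge {a, b} of G_c, the vertices v_a and v_b are adjacent in the lattice graph; in other words, the map n ↦ v_n sends G_c to a spanning tree of (ℤ², ℓ¹), so G_c is obtained from ℤ² by removing some of the edges between consecutive ℓ¹-spheres. -/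
open scoped ENNReal Classical

noncomputable section

/-- **Lemma (the comparison graph embeds into `ℤ²` along a Wang–Wang enumeration).**
Let `v 0, v 1, …` be a Wang–Wang enumeration of `ℤ²` (`v (k-1)` is the `k`-th vertex):
it respects the `ℓ¹`-norm, and the vertex boundary of the first `n` vertices is exactly
the next `∂_V^n` vertices, for every `n ≥ 1`.  Then for every edge `{a, b}` of the
universal comparison graph `G_c` of the lattice graph, the vertices `v_a` and `v_b` are
adjacent in `(ℤ², ℓ¹)`; in other words, `n ↦ v_n` sends `G_c` to a spanning tree of the
lattice graph. -/
theorem comparisonGraph_spanning_tree (v : ℕ → ℤ × ℤ) (hbij : Function.Bijective v)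
    (hnorm : ∀ i j : ℕ, l1 (v i) < l1 (v j) → i < j)
    (hbd : ∀ n : ℕ, 1 ≤ n →
      vertexBoundary latticeZ2 (v '' {k | k < n})
        = v '' {k | n ≤ k ∧ k < n + isoNum latticeZ2 n}) :
    ∀ a b : ℕ+, (comparisonGraph latticeZ2).Adj a b →
      latticeZ2.Adj (v ((a : ℕ) - 1)) (v ((b : ℕ) - 1)) := by
  have hinj := hbij.injective
  have key : ∀ a b : ℕ+, cAdj latticeZ2 a b →
      latticeZ2.Adj (v ((a : ℕ) - 1)) (v ((b : ℕ) - 1)) := by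
    rintro a b ⟨hab, h1, h2⟩
    obtain ⟨i, ha1⟩ : ∃ i, (a : ℕ) = i + 1 := ⟨(a : ℕ) - 1, by have := a.pos; omega⟩
    obtain ⟨j, hb1⟩ : ∃ j, (b : ℕ) = j + 1 := ⟨(b : ℕ) - 1, by have := b.pos; omega⟩
    have hab' : (a : ℕ) < (b : ℕ) := by exact_mod_cast hab
    rw [ha1, hb1] at h1 h2 ⊢
    simp only [Nat.add_sub_cancel] at h1 ⊢
    have hij : i + 1 ≤ j := by omega
    have h2' : j < i + 1 + isoNum latticeZ2 (i + 1) := by omega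
    have hmem : v j ∈ vertexBoundary latticeZ2 (v '' {k | k < i + 1}) := by
      rw [hbd (i + 1) (by omega)]
      exact ⟨j, ⟨hij, h2'⟩, rfl⟩
    obtain ⟨hnot, x, hx, hadj⟩ := hmem
    obtain ⟨m, hm, rfl⟩ := hx
    have hm' : m < i + 1 := hm
    have hmi : m = i := by
      by_contra hne
      have hmlt : m < i := by omega
      have hi1 : 1 ≤ i := by omega
      have hiso : isoNum₀ latticeZ2 i = isoNum latticeZ2 i := by
        unfold isoNum₀; rw [if_neg (by omega)]
      have hjbig : i + isoNum latticeZ2 i ≤ j := by omega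
      have hmem2 : v j ∈ vertexBoundary latticeZ2 (v '' {k | k < i}) := by
        refine ⟨?_, v m, ⟨m, hmlt, rfl⟩, hadj⟩
        rintro ⟨k, hk, hk'⟩
        have : k = j := hinj hk'
        have hk2 : k < i := hk
        omega
      rw [hbd i hi1] at hmem2
      obtain ⟨k, ⟨hk1, hk2⟩, hk'⟩ := hmem2
      have : k = j := hinj hk'
      omega
    subst hmi
    exact hadj.symm
  intro a b hab
  rcases hab with h | h
  · exact key a b h
  · exact (key b a h).symm
end
end
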